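/- arXiv:1110.0799 — 12 statements merged into one kernel-verified Lean document; each statement's English description precedes it below -/
import Mathlib

section
/- Energy identity for smooth solutions of the reduced shallow viscoelastic model: let g, eta_p, lambda > 0 be constants and b : ℝ → ℝ be continuously differentiable. Suppose h, u, sxx, szz : ℝ × ℝ → ℝ are continuously differentiable functions of (t,x) with h > 0, sxx > 0, szz > 0 everywhere, satisfying pointwise the system: ∂t h + ∂x(h u) = 0; ∂t(h u) + ∂x( h u² + g h²/2 + (eta_p/(2 lambda)) h (szz − sxx) ) = −g h ∂x b; ∂t sxx + u ∂x sxx − 2 sxx ∂x u = (1 − sxx)/lambda; ∂t szz + u ∂x szz + 2 szz ∂x u = (1 − szz)/lambda. Define the energy E = h u²/2 + g h²/2 + g b h + (eta_p/(4 lambda)) h (sxx + szz − log(sxx szz) − 2) and the pressure P = g h²/2 + (eta_p/(2 lambda)) h (szz − sxx). Then pointwise ∂t E + ∂x( (E + P) u ) = −(eta_p/(4 lambda²)) h ( sxx + 1/sxx + szz + 1/szz − 4 ). -/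
/-- Energy of the reduced shallow viscoelastic model. -/
noncomputable def svEnergy (g eta_p lam : ℝ) (b : ℝ → ℝ)
    (h u sxx szz : ℝ × ℝ → ℝ) (p : ℝ × ℝ) : ℝ :=
  h p * (u p) ^ 2 / 2 + g * (h p) ^ 2 / 2 + g * b p.2 * h p +
    eta_p / (4 * lam) * h p *
      (sxx p + szz p - Real.log (sxx p * szz p) - 2)

/-- Pressure of the reduced shallow viscoelastic model. -/
noncomputable def svPressure (g eta_p lam : ℝ)
    (h sxx szz : ℝ × ℝ → ℝ) (p : ℝ × ℝ) : ℝ :=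
  g * (h p) ^ 2 / 2 + eta_p / (2 * lam) * h p * (szz p - sxx p)

set_option maxHeartbeats 2000000 in
/-- Energy identity for smooth solutions of the reduced shallow viscoelastic model. -/
theorem energy_identity_reduced_model
    (g eta_p lam : ℝ) (hg : 0 < g) (hetap : 0 < eta_p) (hlam : 0 < lam)
    (b : ℝ → ℝ) (hb : ContDiff ℝ 1 b)
    (h u sxx szz : ℝ × ℝ → ℝ)
    (hh : ContDiff ℝ 1 h) (hu : ContDiff ℝ 1 u)
    (hsxx : ContDiff ℝ 1 sxx) (hszz : ContDiff ℝ 1 szz)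
    (hhpos : ∀ p, 0 < h p) (hsxxpos : ∀ p, 0 < sxx p) (hszzpos : ∀ p, 0 < szz p)
    (mass : ∀ t x : ℝ,
      deriv (fun s => h (s, x)) t + deriv (fun y => h (t, y) * u (t, y)) x = 0)
    (momentum : ∀ t x : ℝ,
      deriv (fun s => h (s, x) * u (s, x)) t +
        deriv (fun y => h (t, y) * (u (t, y)) ^ 2 + g * (h (t, y)) ^ 2 / 2 +
          eta_p / (2 * lam) * h (t, y) * (szz (t, y) - sxx (t, y))) x
        = - (g * h (t, x) * deriv b x))
    (stress_xx : ∀ t x : ℝ,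
      deriv (fun s => sxx (s, x)) t + u (t, x) * deriv (fun y => sxx (t, y)) x -
        2 * sxx (t, x) * deriv (fun y => u (t, y)) x = (1 - sxx (t, x)) / lam)
    (stress_zz : ∀ t x : ℝ,
      deriv (fun s => szz (s, x)) t + u (t, x) * deriv (fun y => szz (t, y)) x +
        2 * szz (t, x) * deriv (fun y => u (t, y)) x = (1 - szz (t, x)) / lam) :
    ∀ t x : ℝ,
      deriv (fun s => svEnergy g eta_p lam b h u sxx szz (s, x)) t +
        deriv (fun y => (svEnergy g eta_p lam b h u sxx szz (t, y) +
          svPressure g eta_p lam h sxx szz (t, y)) * u (t, y)) x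
      = - (eta_p / (4 * lam ^ 2)) * h (t, x) *
          (sxx (t, x) + (sxx (t, x))⁻¹ + szz (t, x) + (szz (t, x))⁻¹ - 4) := by
  intro t x
  -- slice derivatives
  have sliceT : ∀ f : ℝ × ℝ → ℝ, ContDiff ℝ 1 f →
      HasDerivAt (fun s => f (s, x)) (deriv (fun s => f (s, x)) t) t := fun f hf =>
    (((hf.differentiable one_ne_zero) (t, x)).comp t
      (differentiableAt_id.prodMk (differentiableAt_const x))).hasDerivAt
  have sliceX : ∀ f : ℝ × ℝ → ℝ, ContDiff ℝ 1 f →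
      HasDerivAt (fun y => f (t, y)) (deriv (fun y => f (t, y)) x) x := fun f hf =>
    (((hf.differentiable one_ne_zero) (t, x)).comp x
      ((differentiableAt_const t).prodMk differentiableAt_id)).hasDerivAt
  obtain ⟨ht, Hht⟩ : ∃ d, HasDerivAt (fun s => h (s, x)) d t := ⟨_, sliceT h hh⟩
  obtain ⟨hx, Hhx⟩ : ∃ d, HasDerivAt (fun y => h (t, y)) d x := ⟨_, sliceX h hh⟩
  obtain ⟨ut, Hut⟩ : ∃ d, HasDerivAt (fun s => u (s, x)) d t := ⟨_, sliceT u hu⟩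
  obtain ⟨ux, Hux⟩ : ∃ d, HasDerivAt (fun y => u (t, y)) d x := ⟨_, sliceX u hu⟩
  obtain ⟨pxt, Hpxt⟩ : ∃ d, HasDerivAt (fun s => sxx (s, x)) d t := ⟨_, sliceT sxx hsxx⟩
  obtain ⟨pxq, Hpxq⟩ : ∃ d, HasDerivAt (fun y => sxx (t, y)) d x := ⟨_, sliceX sxx hsxx⟩
  obtain ⟨pzt, Hpzt⟩ : ∃ d, HasDerivAt (fun s => szz (s, x)) d t := ⟨_, sliceT szz hszz⟩
  obtain ⟨pzq, Hpzq⟩ : ∃ d, HasDerivAt (fun y => szz (t, y)) d x := ⟨_, sliceX szz hszz⟩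
  have Hb : HasDerivAt b (deriv b x) x := ((hb.differentiable one_ne_zero) x).hasDerivAt
  have hne : h (t, x) ≠ 0 := (hhpos _).ne'
  have pxne : sxx (t, x) ≠ 0 := (hsxxpos _).ne'
  have pzne : szz (t, x) ≠ 0 := (hszzpos _).ne'
  have prodTne : sxx (t, x) * szz (t, x) ≠ 0 := mul_ne_zero pxne pzne
  -- the four scalar equations
  have e1 := mass t x
  rw [Hht.deriv, (Hhx.fun_mul Hux).deriv] at e1
  have e2 := momentum t x
  have HmomX := ((Hhx.fun_mul (Hux.fun_pow 2)).fun_add (((Hhx.fun_pow 2).const_mul g).div_const 2)).fun_add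
      ((Hhx.const_mul (eta_p / (2 * lam))).fun_mul (Hpzq.fun_sub Hpxq))
  rw [(Hht.fun_mul Hut).deriv, HmomX.deriv] at e2
  have e3 := stress_xx t x
  rw [Hpxt.deriv, Hpxq.deriv, Hux.deriv] at e3
  have e4 := stress_zz t x
  rw [Hpzt.deriv, Hpzq.deriv, Hux.deriv] at e4
  -- goal derivatives
  simp only [svEnergy, svPressure]
  have HEt := ((((Hht.fun_mul (Hut.fun_pow 2)).div_const 2).fun_add
      (((Hht.fun_pow 2).const_mul g).div_const 2)).fun_add (Hht.const_mul (g * b x))).fun_add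
      ((Hht.const_mul (eta_p / (4 * lam))).fun_mul
        (((Hpxt.fun_add Hpzt).fun_sub ((Hpxt.fun_mul Hpzt).log prodTne)).sub_const 2))
  have HEPx := ((((((Hhx.fun_mul (Hux.fun_pow 2)).div_const 2).fun_add
      (((Hhx.fun_pow 2).const_mul g).div_const 2)).fun_add ((Hb.const_mul g).fun_mul Hhx)).fun_add
      ((Hhx.const_mul (eta_p / (4 * lam))).fun_mul
        (((Hpxq.fun_add Hpzq).fun_sub ((Hpxq.fun_mul Hpzq).log prodTne)).sub_const 2))).fun_add
      ((((Hhx.fun_pow 2).const_mul g).div_const 2).fun_add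
        ((Hhx.const_mul (eta_p / (2 * lam))).fun_mul (Hpzq.fun_sub Hpxq)))).fun_mul Hux
  rw [HEt.deriv, HEPx.deriv]
  have hlne : lam ≠ 0 := hlam.ne'
  linear_combination (norm := (field_simp; ring))
    (u (t, x) ^ 2 / 2 + g * h (t, x) + g * b x +
      eta_p / (4 * lam) * (sxx (t, x) + szz (t, x) - Real.log (sxx (t, x) * szz (t, x)) - 2) -
      u (t, x) ^ 2) * e1 +
    u (t, x) * e2 +
    eta_p / (4 * lam) * h (t, x) * (1 - (sxx (t, x))⁻¹) * e3 +
    eta_p / (4 * lam) * h (t, x) * (1 - (szz (t, x))⁻¹) * e4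
end

section
/- Convexity of the physical energy in the pseudo-conservative variables: let g, eta_p, lambda > 0 and b ∈ ℝ be constants. The function E : ℝ⁴ → ℝ defined on the open convex set { q ∈ ℝ⁴ : q₁ > 0, q₃ > 0, q₄ > 0 } by E(q₁,q₂,q₃,q₄) = q₂²/(2 q₁) + g q₁²/2 + g b q₁ + (eta_p/(4 lambda)) ( q₃ + q₄ − q₁ log( q₃ q₄ / q₁² ) − 2 q₁ ) is convex on this set. -/
private lemma comb_pos {t s a b : ℝ} (ht : 0 ≤ t) (hs : 0 ≤ s) (hts : t + s = 1)
    (ha : 0 < a) (hb : 0 < b) : 0 < t * a + s * b := by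
  rcases eq_or_lt_of_le ht with h | h
  · have hs1 : s = 1 := by linarith
    simp [← h, hs1, hb]
  · nlinarith [mul_nonneg hs hb.le, mul_pos h ha]

/-- Tangent-line (supporting hyperplane) inequality for `x ↦ x (log x - log y)`. -/
private lemma tangent_ineq {x y m₁ m₂ : ℝ} (hx : 0 < x) (hy : 0 < y)
    (hm₁ : 0 < m₁) (hm₂ : 0 < m₂) :
    x * (Real.log m₁ - Real.log m₂) + x - m₁ / m₂ * y ≤ x * (Real.log x - Real.log y) := by
  have h := Real.log_le_sub_one_of_pos (show 0 < y * m₁ / (x * m₂) by positivity)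
  rw [Real.log_div (by positivity) (by positivity), Real.log_mul hy.ne' hm₁.ne',
    Real.log_mul hx.ne' hm₂.ne'] at h
  have h' := mul_le_mul_of_nonneg_left h hx.le
  have e : x * (y * m₁ / (x * m₂) - 1) = m₁ / m₂ * y - x := by
    field_simp
  rw [e] at h'
  nlinarith [h']

/-- log-sum / relative entropy convexity inequality. -/
private lemma logsum {t s a₁ a₃ b₁ b₃ : ℝ} (ht : 0 ≤ t) (hs : 0 ≤ s) (hts : t + s = 1)
    (ha₁ : 0 < a₁) (ha₃ : 0 < a₃) (hb₁ : 0 < b₁) (hb₃ : 0 < b₃) :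
    (t * a₁ + s * b₁) * (Real.log (t * a₁ + s * b₁) - Real.log (t * a₃ + s * b₃)) ≤
      t * (a₁ * (Real.log a₁ - Real.log a₃)) + s * (b₁ * (Real.log b₁ - Real.log b₃)) := by
  have hz₁ : 0 < t * a₁ + s * b₁ := comb_pos ht hs hts ha₁ hb₁
  have hz₃ : 0 < t * a₃ + s * b₃ := comb_pos ht hs hts ha₃ hb₃
  have h1 := mul_le_mul_of_nonneg_left (tangent_ineq ha₁ ha₃ hz₁ hz₃) ht
  have h2 := mul_le_mul_of_nonneg_left (tangent_ineq hb₁ hb₃ hz₁ hz₃) hs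
  have hzz : (t * a₁ + s * b₁) / (t * a₃ + s * b₃) * (t * a₃ + s * b₃) = t * a₁ + s * b₁ :=
    div_mul_cancel₀ _ hz₃.ne'
  nlinarith [h1, h2, hzz]

/-- Convexity of the physical energy in the pseudo-conservative variables
`q = (h, h u, h σxx, h σzz)`. -/
theorem energy_convex_pseudo_conservative
    (g eta_p lam b : ℝ) (hg : 0 < g) (hetap : 0 < eta_p) (hlam : 0 < lam) :
    ConvexOn ℝ {q : ℝ × ℝ × ℝ × ℝ | 0 < q.1 ∧ 0 < q.2.2.1 ∧ 0 < q.2.2.2}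
      (fun q : ℝ × ℝ × ℝ × ℝ =>
        q.2.1 ^ 2 / (2 * q.1) + g * q.1 ^ 2 / 2 + g * b * q.1 +
          eta_p / (4 * lam) *
            (q.2.2.1 + q.2.2.2 - q.1 * Real.log (q.2.2.1 * q.2.2.2 / q.1 ^ 2)
              - 2 * q.1)) := by
  have hc : (0:ℝ) ≤ eta_p / (4 * lam) := by positivity
  constructor
  · rintro ⟨x1, x2, x3, x4⟩ ⟨hx1, hx3, hx4⟩ ⟨y1, y2, y3, y4⟩ ⟨hy1, hy3, hy4⟩ t s ht hs hts
    exact ⟨comb_pos ht hs hts hx1 hy1, comb_pos ht hs hts hx3 hy3, comb_pos ht hs hts hx4 hy4⟩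
  · rintro ⟨x1, x2, x3, x4⟩ ⟨hx1, hx3, hx4⟩ ⟨y1, y2, y3, y4⟩ ⟨hy1, hy3, hy4⟩ t s ht hs hts
    simp only [Prod.smul_mk, Prod.mk_add_mk, smul_eq_mul]
    have hz1 : 0 < t * x1 + s * y1 := comb_pos ht hs hts hx1 hy1
    have hz3 : 0 < t * x3 + s * y3 := comb_pos ht hs hts hx3 hy3
    have hz4 : 0 < t * x4 + s * y4 := comb_pos ht hs hts hx4 hy4
    have expand : ∀ a c d : ℝ, 0 < a → 0 < c → 0 < d →
        Real.log (c * d / a ^ 2) = Real.log c + Real.log d - 2 * Real.log a := by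
      intro a c d ha hcc hd
      rw [Real.log_div (by positivity) (by positivity), Real.log_mul hcc.ne' hd.ne',
        Real.log_pow]
      push_cast; ring
    rw [expand _ _ _ hz1 hz3 hz4, expand _ _ _ hx1 hx3 hx4, expand _ _ _ hy1 hy3 hy4]
    -- kinetic term
    have hA : (t * x2 + s * y2) ^ 2 / (2 * (t * x1 + s * y1)) ≤
        t * (x2 ^ 2 / (2 * x1)) + s * (y2 ^ 2 / (2 * y1)) := by
      rw [div_le_iff₀ (by positivity)]
      have e1 : t * (x2 ^ 2 / (2 * x1)) + s * (y2 ^ 2 / (2 * y1)) =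
          (t * x2 ^ 2 * y1 + s * y2 ^ 2 * x1) / (2 * x1 * y1) := by
        field_simp
      rw [e1, div_mul_eq_mul_div, le_div_iff₀ (by positivity)]
      nlinarith [mul_nonneg (mul_nonneg ht hs) (sq_nonneg (x2 * y1 - y2 * x1)),
        mul_pos hx1 hy1]
    -- gravity quadratic term
    have hB : g * (t * x1 + s * y1) ^ 2 / 2 ≤ t * (g * x1 ^ 2 / 2) + s * (g * y1 ^ 2 / 2) := by
      have h := mul_nonneg (mul_nonneg (mul_nonneg hg.le ht) hs) (sq_nonneg (x1 - y1))
      have hs' : s = 1 - t := by linarith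
      rw [hs'] at h ⊢
      nlinarith [h]
    -- entropy terms
    have hC3 := mul_le_mul_of_nonneg_left (logsum ht hs hts hx1 hx3 hy1 hy3) hc
    have hC4 := mul_le_mul_of_nonneg_left (logsum ht hs hts hx1 hx4 hy1 hy4) hc
    linarith [hA, hB, hC3, hC4]
end

section
/- Non-convexity of the energy with respect to any conservative variables: let g, eta_p, lambda > 0 be constants, and let Omega, zeta : ℝ → ℝ be twice continuously differentiable functions such that Omega' is not identically zero (there exists x₀ with Omega'(x₀) ≠ 0). Then the function defined on (0,∞) × ℝ × ℝ × ℝ by (V₁,V₂,V₃,V₄) ↦ V₂²/2 + g/(2 V₁) + (eta_p/(4 lambda)) ( V₁² exp(−Omega(V₃)) + V₁^{−2} exp(−zeta(V₄)) + Omega(V₃) + zeta(V₄) − 2 ) is NOT convex on this set. -/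
open Set Filter

lemma aux_deriv_nonneg {ψ : ℝ → ℝ} {δ Q : ℝ} (hδ : 0 < δ)
    (hmono : MonotoneOn ψ (Set.Ioo (-δ) δ)) (hQ : HasDerivAt ψ Q 0) : 0 ≤ Q := by
  have h := hasDerivAt_iff_tendsto_slope.mp hQ
  have h' : Tendsto (slope ψ 0) (nhdsWithin 0 (Set.Ioi 0)) (nhds Q) :=
    h.mono_left (nhdsWithin_mono 0 (fun x hx => ne_of_gt hx))
  refine ge_of_tendsto h' ?_
  filter_upwards [Ioo_mem_nhdsGT_of_mem (Set.left_mem_Ico.mpr hδ)] with t ht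
  rw [slope_def_field]
  apply div_nonneg _ (by linarith [ht.1])
  have h0 : (0:ℝ) ∈ Set.Ioo (-δ) δ := by constructor <;> linarith
  have ht' : t ∈ Set.Ioo (-δ) δ := by constructor <;> [linarith [ht.1]; exact ht.2]
  have := hmono h0 ht' (le_of_lt ht.1)
  linarith

lemma core (g k : ℝ) (hg : 0 < g) (hk : 0 < k)
    (Omega zeta : ℝ → ℝ) (hOmega : ContDiff ℝ 2 Omega)
    (x₀ a α : ℝ) (ha : 0 < a)
    (hconv : ConvexOn ℝ {V : ℝ × ℝ × ℝ × ℝ | 0 < V.1}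
      (fun V : ℝ × ℝ × ℝ × ℝ =>
        V.2.1 ^ 2 / 2 + g / (2 * V.1) +
          k *
            (V.1 ^ 2 * Real.exp (-(Omega V.2.2.1)) +
              (V.1 ^ 2)⁻¹ * Real.exp (-(zeta V.2.2.2)) +
              Omega V.2.2.1 + zeta V.2.2.2 - 2))) :
    0 ≤ g * α ^ 2 / a ^ 3 +
        k * ((2 * α ^ 2 - 4 * a * α * deriv Omega x₀ +
              a ^ 2 * ((deriv Omega x₀) ^ 2 - deriv (deriv Omega) x₀)) * Real.exp (-(Omega x₀)) +
            6 * α ^ 2 * Real.exp (-(zeta 0)) / a ^ 4 + deriv (deriv Omega) x₀) := by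
  -- differentiability of Omega and deriv Omega
  have h2 : ContDiff ℝ ((1:ℕ) + 1) Omega := by exact_mod_cast hOmega
  rw [contDiff_succ_iff_deriv] at h2
  have hΩ1 : Differentiable ℝ Omega := h2.1
  have hΩ2 : Differentiable ℝ (deriv Omega) := h2.2.2.differentiable (by simp)
  set δ : ℝ := a / (2 * (|α| + 1)) with hδdef
  have hδ : 0 < δ := by positivity
  have hu : ∀ t ∈ Set.Ioo (-δ) δ, a / 2 < t * α + a := by
    intro t ht
    have h1 : |t * α| < a / 2 := by
      rw [abs_mul]
      calc |t| * |α| ≤ |t| * (|α| + 1) := by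
            apply mul_le_mul_of_nonneg_left (by linarith) (abs_nonneg t)
        _ < δ * (|α| + 1) := by
            apply mul_lt_mul_of_pos_right _ (by positivity)
            rw [abs_lt]; exact ⟨ht.1, ht.2⟩
        _ = a / 2 := by rw [hδdef]; field_simp
    have := neg_abs_le (t * α)
    linarith
  -- the affine line
  set L : ℝ →ᵃ[ℝ] ℝ × ℝ × ℝ × ℝ :=
    AffineMap.lineMap ((a, 0, x₀, 0) : ℝ × ℝ × ℝ × ℝ) ((a + α, 0, x₀ + 1, 0) : ℝ × ℝ × ℝ × ℝ)
    with hLdef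
  have hL : ∀ t : ℝ, L t = (t * α + a, 0, t + x₀, 0) := by
    intro t
    simp [hLdef, AffineMap.lineMap_apply, Prod.ext_iff]
  set φ : ℝ → ℝ := fun t =>
    (0:ℝ) ^ 2 / 2 + g / (2 * (t * α + a)) +
      k * ((t * α + a) ^ 2 * Real.exp (-(Omega (t + x₀))) +
        ((t * α + a) ^ 2)⁻¹ * Real.exp (-(zeta 0)) + Omega (t + x₀) + zeta 0 - 2) with hφdef
  have hφconv : ConvexOn ℝ (Set.Ioo (-δ) δ) φ := by
    have h1 := hconv.comp_affineMap L
    have hsub : Set.Ioo (-δ) δ ⊆ L ⁻¹' {V : ℝ × ℝ × ℝ × ℝ | 0 < V.1} := by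
      intro t ht
      have := hu t ht
      simp [Set.mem_preimage, hL t]
      linarith
    have h2 := h1.subset hsub (convex_Ioo _ _)
    have heq : (fun V : ℝ × ℝ × ℝ × ℝ =>
        V.2.1 ^ 2 / 2 + g / (2 * V.1) +
          k * (V.1 ^ 2 * Real.exp (-(Omega V.2.2.1)) +
              (V.1 ^ 2)⁻¹ * Real.exp (-(zeta V.2.2.2)) +
              Omega V.2.2.1 + zeta V.2.2.2 - 2)) ∘ L = φ := by
      funext t
      simp [Function.comp, hL t, hφdef]
    rwa [heq] at h2
  -- derivative helpers
  have hu' : ∀ t : ℝ, HasDerivAt (fun s : ℝ => s * α + a) α t := by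
    intro t
    simpa using ((hasDerivAt_id t).mul_const α).add_const a
  have hW : ∀ t : ℝ, HasDerivAt (fun s : ℝ => Omega (s + x₀)) (deriv Omega (t + x₀)) t := by
    intro t
    exact ((hΩ1 (t + x₀)).hasDerivAt).comp_add_const t x₀
  have hW' : HasDerivAt (fun s : ℝ => deriv Omega (s + x₀)) (deriv (deriv Omega) x₀) 0 := by
    simpa using ((hΩ2 (0 + x₀)).hasDerivAt).comp_add_const 0 x₀
  set φ₁ : ℝ → ℝ := fun t =>
    -(g * α) / (2 * (t * α + a) ^ 2) +
      k * ((2 * α * (t * α + a) - (t * α + a) ^ 2 * deriv Omega (t + x₀)) *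
          Real.exp (-(Omega (t + x₀))) -
        2 * α * Real.exp (-(zeta 0)) / (t * α + a) ^ 3 + deriv Omega (t + x₀)) with hφ₁def
  have hφ1 : ∀ t ∈ Set.Ioo (-δ) δ, HasDerivAt φ (φ₁ t) t := by
    intro t ht
    have hpos : 0 < t * α + a := lt_trans (by positivity) (hu t ht)
    have hne : t * α + a ≠ 0 := ne_of_gt hpos
    have hexp : HasDerivAt (fun s : ℝ => Real.exp (-(Omega (s + x₀))))
        (Real.exp (-(Omega (t + x₀))) * -(deriv Omega (t + x₀))) t := ((hW t).neg).exp
    have hsq := (hu' t).pow 2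
    have hA := hsq.mul hexp
    have hB := (hsq.inv (pow_ne_zero 2 hne)).mul_const (Real.exp (-(zeta 0)))
    have hden := (hu' t).const_mul 2
    have hdiv := (hasDerivAt_const t g).div hden (by positivity)
    have hin := ((((hA.add hB).add (hW t)).add_const (zeta 0)).sub_const 2).const_mul k
    have H := (hdiv.const_add ((0:ℝ) ^ 2 / 2)).add hin
    refine H.congr_deriv ?_
    rw [hφ₁def]
    simp only [Pi.pow_apply, Pi.mul_apply, Pi.sub_apply, Pi.add_apply, Pi.inv_apply]
    field_simp
    ring
  have hmono : MonotoneOn φ₁ (Set.Ioo (-δ) δ) := by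
    have hm := hφconv.monotoneOn_deriv (fun x hx => (hφ1 x hx).differentiableAt)
    intro x hx y hy hxy
    rw [← (hφ1 x hx).deriv, ← (hφ1 y hy).deriv]
    exact hm hx hy hxy
  -- second derivative at 0
  have hne0 : (0:ℝ) * α + a ≠ 0 := by simpa using ha.ne'
  have hexp0 : HasDerivAt (fun s : ℝ => Real.exp (-(Omega (s + x₀))))
      (Real.exp (-(Omega (0 + x₀))) * -(deriv Omega (0 + x₀))) 0 := ((hW 0).neg).exp
  have hS1 := (hasDerivAt_const (0:ℝ) (-(g * α))).div (((hu' 0).pow 2).const_mul 2)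
    (by simpa using (by positivity : (2:ℝ) * a ^ 2 ≠ 0))
  have hS2a := ((hu' 0).const_mul (2 * α)).sub (((hu' 0).pow 2).mul hW')
  have hS2 := hS2a.mul hexp0
  have hS3 := (hasDerivAt_const (0:ℝ) (2 * α * Real.exp (-(zeta 0)))).div ((hu' 0).pow 3)
    (pow_ne_zero 3 hne0)
  have H2 := hS1.add ((((hS2.sub hS3).add hW').const_mul k))
  have hQ : HasDerivAt φ₁ (g * α ^ 2 / a ^ 3 +
      k * ((2 * α ^ 2 - 4 * a * α * deriv Omega x₀ +
            a ^ 2 * ((deriv Omega x₀) ^ 2 - deriv (deriv Omega) x₀)) * Real.exp (-(Omega x₀)) +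
          6 * α ^ 2 * Real.exp (-(zeta 0)) / a ^ 4 + deriv (deriv Omega) x₀)) 0 := by
    have hfun : φ₁ = fun t =>
        -(g * α) / (2 * (t * α + a) ^ 2) +
          k * ((2 * α * (t * α + a) - (t * α + a) ^ 2 * deriv Omega (t + x₀)) *
              Real.exp (-(Omega (t + x₀))) -
            2 * α * Real.exp (-(zeta 0)) / (t * α + a) ^ 3 + deriv Omega (t + x₀)) := hφ₁def
    rw [hfun]
    refine H2.congr_deriv ?_
    have ha' : a ≠ 0 := ha.ne'
    simp only [zero_add, zero_mul, Pi.pow_apply, Pi.mul_apply, Pi.sub_apply, Pi.add_apply, Pi.inv_apply]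
    field_simp
    ring
  exact aux_deriv_nonneg hδ hmono hQ


lemma pick_point (g k p d E ez : ℝ) (hg : 0 < g) (hk : 0 < k) (hp : p ≠ 0)
    (hE : 0 < E) (hez : 0 < ez) :
    ∃ a α : ℝ, 0 < a ∧
      g * α ^ 2 / a ^ 3 +
        k * ((2 * α ^ 2 - 4 * a * α * p + a ^ 2 * (p ^ 2 - d)) * E +
          6 * α ^ 2 * ez / a ^ 4 + d) < 0 := by
  have hp2 : 0 < p ^ 2 := by positivity
  rcases lt_or_ge d 0 with hd | hd
  · -- d < 0 : take α = 0 and a small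
    have hden : 0 < 2 * (p ^ 2 - d) * E := by nlinarith
    obtain ⟨a, ha, hkey⟩ : ∃ a : ℝ, 0 < a ∧ a ^ 2 * (p ^ 2 - d) * E = -d / 2 := by
      have harg : 0 < -d / (2 * (p ^ 2 - d) * E) := div_pos (by linarith) hden
      refine ⟨Real.sqrt (-d / (2 * (p ^ 2 - d) * E)), Real.sqrt_pos.mpr harg, ?_⟩
      rw [Real.sq_sqrt harg.le]
      have hpd : p ^ 2 - d ≠ 0 := by linarith
      field_simp
    refine ⟨a, 0, ha, ?_⟩
    have e0 : g * (0:ℝ) ^ 2 / a ^ 3 + k * ((2 * (0:ℝ) ^ 2 - 4 * a * 0 * p + a ^ 2 * (p ^ 2 - d)) * E +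
          6 * (0:ℝ) ^ 2 * ez / a ^ 4 + d) = k * (a ^ 2 * (p ^ 2 - d) * E + d) := by
      field_simp
      ring
    rw [e0, hkey]
    nlinarith
  · -- 0 ≤ d : take α = a p with a large
    obtain ⟨a, ha1, haX⟩ : ∃ a : ℝ,
        1 ≤ a ∧ g * p ^ 2 + 6 * k * ez * p ^ 2 + k * d + 1 < k * E * p ^ 2 * a ^ 2 := by
      set X := g * p ^ 2 + 6 * k * ez * p ^ 2 + k * d + 1 with hXdef
      have hXpos : 0 < X := by positivity
      have hD : 0 < k * E * p ^ 2 := by positivity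
      refine ⟨1 + X / (k * E * p ^ 2), le_add_of_nonneg_right (div_pos hXpos hD).le, ?_⟩
      have h1 : X = (X / (k * E * p ^ 2)) * (k * E * p ^ 2) := by field_simp
      have hfrac : 0 < X / (k * E * p ^ 2) := by positivity
      nlinarith [hfrac, hD, h1]
    have ha : 0 < a := by linarith
    refine ⟨a, a * p, ha, ?_⟩
    have e1 : g * (a * p) ^ 2 / a ^ 3 = g * p ^ 2 / a := by
      field_simp
    have e2 : 6 * (a * p) ^ 2 * ez / a ^ 4 = 6 * p ^ 2 * ez / a ^ 2 := by
      field_simp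
    rw [e1, e2]
    have b1 : g * p ^ 2 / a ≤ g * p ^ 2 := div_le_self (by positivity) ha1
    have b2 : 6 * p ^ 2 * ez / a ^ 2 ≤ 6 * p ^ 2 * ez := by
      apply div_le_self (by positivity)
      nlinarith
    have hinner : (2 * (a * p) ^ 2 - 4 * a * (a * p) * p + a ^ 2 * (p ^ 2 - d)) * E
        ≤ -(a ^ 2 * p ^ 2) * E := by
      nlinarith [mul_nonneg (mul_nonneg (sq_nonneg a) hd) hE.le]
    have hmul : k * ((2 * (a * p) ^ 2 - 4 * a * (a * p) * p + a ^ 2 * (p ^ 2 - d)) * E +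
          6 * p ^ 2 * ez / a ^ 2 + d)
        ≤ k * (-(a ^ 2 * p ^ 2) * E + 6 * p ^ 2 * ez + d) := by
      apply mul_le_mul_of_nonneg_left _ hk.le
      linarith
    have hring : k * (-(a ^ 2 * p ^ 2) * E + 6 * p ^ 2 * ez + d) =
        -(k * E * p ^ 2 * a ^ 2) + 6 * k * ez * p ^ 2 + k * d := by ring
    rw [hring] at hmul
    linarith


/-- Non-convexity of the energy with respect to any conservative variables:
the Lagrangian energy written in the variables
`V = (1/h, u, ϖ⁻¹(σxx^{-1/2}/h), ς⁻¹(σzz^{1/2}/h))`, with `Ω = 2 log ϖ` and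
`ζ = -2 log ς`, is never convex. -/
theorem energy_not_convex_conservative_variables
    (g eta_p lam : ℝ) (hg : 0 < g) (hetap : 0 < eta_p) (hlam : 0 < lam)
    (Omega zeta : ℝ → ℝ) (hOmega : ContDiff ℝ 2 Omega) (hzeta : ContDiff ℝ 2 zeta)
    (hOmega' : ∃ x₀ : ℝ, deriv Omega x₀ ≠ 0) :
    ¬ ConvexOn ℝ {V : ℝ × ℝ × ℝ × ℝ | 0 < V.1}
      (fun V : ℝ × ℝ × ℝ × ℝ =>
        V.2.1 ^ 2 / 2 + g / (2 * V.1) +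
          eta_p / (4 * lam) *
            (V.1 ^ 2 * Real.exp (-(Omega V.2.2.1)) +
              (V.1 ^ 2)⁻¹ * Real.exp (-(zeta V.2.2.2)) +
              Omega V.2.2.1 + zeta V.2.2.2 - 2)) := by
  intro hconv
  obtain ⟨x₀, hp⟩ := hOmega'
  have hk : 0 < eta_p / (4 * lam) := by positivity
  obtain ⟨a, α, ha, hneg⟩ := pick_point g (eta_p / (4 * lam)) (deriv Omega x₀)
    (deriv (deriv Omega) x₀) (Real.exp (-(Omega x₀))) (Real.exp (-(zeta 0)))
    hg hk hp (Real.exp_pos _) (Real.exp_pos _)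
  have h0 := core g (eta_p / (4 * lam)) hg hk Omega zeta hOmega x₀ a α ha hconv
  linarith
end

section
/- Properties of the Lagrangian sound speed: let g, eta_p, lambda > 0 and fix sxx > 0, szz > 0. For h > 0 set p(h) = g h + (eta_p/(2 lambda)) ( 3 (h·szz)² + (h·sxx)^{−2} ) and phi(h) = h · sqrt(p(h)). Then phi is differentiable on (0,∞) with phi'(h) = ( 3 g h + 6 (eta_p/lambda) (h·szz)² ) / ( 2 sqrt(p(h)) ); consequently 0 < phi'(h) ≤ 2 sqrt(p(h)) for all h > 0, and phi(h) → ∞ as h → ∞. -/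
/-- Properties of the Lagrangian sound speed `φ(h) = h √(p(h))` where
`p(h) = g h + (η_p/(2λ)) (3 (h szz)² + (h sxx)⁻²)`. -/
theorem lagrangian_sound_speed_properties
    (g eta_p lam sxx szz : ℝ) (hg : 0 < g) (hetap : 0 < eta_p) (hlam : 0 < lam)
    (hsxx : 0 < sxx) (hszz : 0 < szz) :
    (∀ h : ℝ, 0 < h →
      HasDerivAt
        (fun h : ℝ => h * Real.sqrt
          (g * h + eta_p / (2 * lam) * (3 * (h * szz) ^ 2 + ((h * sxx) ^ 2)⁻¹)))
        ((3 * g * h + 6 * (eta_p / lam) * (h * szz) ^ 2) /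
          (2 * Real.sqrt
            (g * h + eta_p / (2 * lam) * (3 * (h * szz) ^ 2 + ((h * sxx) ^ 2)⁻¹)))) h ∧
      0 < (3 * g * h + 6 * (eta_p / lam) * (h * szz) ^ 2) /
          (2 * Real.sqrt
            (g * h + eta_p / (2 * lam) * (3 * (h * szz) ^ 2 + ((h * sxx) ^ 2)⁻¹))) ∧
      (3 * g * h + 6 * (eta_p / lam) * (h * szz) ^ 2) /
          (2 * Real.sqrt
            (g * h + eta_p / (2 * lam) * (3 * (h * szz) ^ 2 + ((h * sxx) ^ 2)⁻¹)))
        ≤ 2 * Real.sqrt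
            (g * h + eta_p / (2 * lam) * (3 * (h * szz) ^ 2 + ((h * sxx) ^ 2)⁻¹))) ∧
    Filter.Tendsto
      (fun h : ℝ => h * Real.sqrt
        (g * h + eta_p / (2 * lam) * (3 * (h * szz) ^ 2 + ((h * sxx) ^ 2)⁻¹)))
      Filter.atTop Filter.atTop := by
  have hc : 0 < eta_p / (2 * lam) := by positivity
  constructor
  · intro h hh
    have hp : 0 < g * h + eta_p / (2 * lam) * (3 * (h * szz) ^ 2 + ((h * sxx) ^ 2)⁻¹) := by
      positivity
    set p := g * h + eta_p / (2 * lam) * (3 * (h * szz) ^ 2 + ((h * sxx) ^ 2)⁻¹) with hpdef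
    have hs : 0 < Real.sqrt p := Real.sqrt_pos.2 hp
    have hss : Real.sqrt p * Real.sqrt p = p := Real.mul_self_sqrt hp.le
    have hh' : h ≠ 0 := hh.ne'
    have hsxx' : sxx ≠ 0 := hsxx.ne'
    have hq : HasDerivAt
        (fun h : ℝ => g * h + eta_p / (2 * lam) * (3 * (h * szz) ^ 2 + ((h * sxx) ^ 2)⁻¹))
        (g * 1 + eta_p / (2 * lam) *
          (3 * (2 * (h * szz) ^ 1 * szz) +
            -(2 * (h * sxx) ^ 1 * sxx) / ((h * sxx) ^ 2) ^ 2)) h := by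
      have h1 : HasDerivAt (fun h : ℝ => h * szz) szz h := by
        simpa using (hasDerivAt_id h).mul_const szz
      have h2 : HasDerivAt (fun h : ℝ => h * sxx) sxx h := by
        simpa using (hasDerivAt_id h).mul_const sxx
      have hne : (h * sxx) ^ 2 ≠ 0 := by positivity
      exact ((hasDerivAt_id h).const_mul g).add
        ((((h1.pow 2).const_mul 3).add ((h2.pow 2).inv hne)).const_mul (eta_p / (2 * lam)))
    have hsq : HasDerivAt (fun h : ℝ => Real.sqrt
        (g * h + eta_p / (2 * lam) * (3 * (h * szz) ^ 2 + ((h * sxx) ^ 2)⁻¹)))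
        ((1 / (2 * Real.sqrt p)) *
          (g * 1 + eta_p / (2 * lam) *
            (3 * (2 * (h * szz) ^ 1 * szz) +
              -(2 * (h * sxx) ^ 1 * sxx) / ((h * sxx) ^ 2) ^ 2))) h :=
      (Real.hasDerivAt_sqrt hp.ne').comp h hq
    have hd := (hasDerivAt_id h).mul hsq
    have key : 3 * g * h + 6 * (eta_p / lam) * (h * szz) ^ 2 =
        2 * p + h * (g * 1 + eta_p / (2 * lam) *
          (3 * (2 * (h * szz) ^ 1 * szz) +
            -(2 * (h * sxx) ^ 1 * sxx) / ((h * sxx) ^ 2) ^ 2)) := by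
      rw [hpdef]
      field_simp
      ring
    refine ⟨?_, ?_, ?_⟩
    · convert hd using 1
      · rfl
      · rfl
      · rfl
      simp only [id_eq, one_mul]
      rw [← hpdef, key]
      generalize (g * 1 + eta_p / (2 * lam) *
          (3 * (2 * (h * szz) ^ 1 * szz) +
            -(2 * (h * sxx) ^ 1 * sxx) / ((h * sxx) ^ 2) ^ 2)) = D
      rw [div_eq_iff (by positivity : (2 : ℝ) * Real.sqrt p ≠ 0)]
      field_simp
      nlinarith [hss]
    · apply div_pos
      · positivity
      · positivity
    · rw [div_le_iff₀ (by positivity)]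
      have heq : eta_p / lam = 2 * (eta_p / (2 * lam)) := by field_simp
      have h4 : 0 < eta_p / (2 * lam) * ((h * sxx) ^ 2)⁻¹ := by positivity
      have hnum : 3 * g * h + 6 * (eta_p / lam) * (h * szz) ^ 2 ≤ 4 * p := by
        rw [hpdef, heq]
        nlinarith [h4, mul_pos hg hh]
      calc 3 * g * h + 6 * (eta_p / lam) * (h * szz) ^ 2 ≤ 4 * p := hnum
        _ = 2 * Real.sqrt p * (2 * Real.sqrt p) := by
          rw [show 2 * Real.sqrt p * (2 * Real.sqrt p) = 4 * (Real.sqrt p * Real.sqrt p) by ring, hss]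
  · have hbase : Filter.Tendsto (fun h : ℝ => h * Real.sqrt g) Filter.atTop Filter.atTop :=
      Filter.Tendsto.atTop_mul_const (Real.sqrt_pos.2 hg) Filter.tendsto_id
    refine Filter.tendsto_atTop_mono' _ ?_ hbase
    filter_upwards [Filter.eventually_ge_atTop 1] with h hh
    have hh0 : (0:ℝ) < h := lt_of_lt_of_le one_pos hh
    have hle : g ≤ g * h + eta_p / (2 * lam) * (3 * (h * szz) ^ 2 + ((h * sxx) ^ 2)⁻¹) := by
      have h1 : g ≤ g * h := le_mul_of_one_le_right hg.le hh
      have h2 : 0 ≤ eta_p / (2 * lam) * (3 * (h * szz) ^ 2 + ((h * sxx) ^ 2)⁻¹) := by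
        positivity
      linarith
    exact mul_le_mul_of_nonneg_left (Real.sqrt_le_sqrt hle) hh0.le
end

section
/- Hyperbolicity and eigenvalues of the reduced model: let g, eta_p, lambda > 0, let h > 0, u ∈ ℝ, sigma_xx > 0, sigma_zz > 0 and p₃, p₄ ∈ ℝ, and set a² = g h + (eta_p/(2 lambda)) (3 sigma_zz + sigma_xx) with a = sqrt(a²) > 0. Then the 4×4 real matrix A with rows (u, h, 0, 0), (a²/h, u, p₃, p₄), (0, 0, u, 0), (0, 0, 0, u) has characteristic polynomial (X − u)² ( (X − u)² − a² ); in particular its eigenvalues are the real numbers u − a, u (with multiplicity two) and u + a, so A is diagonalizable over ℝ. -/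
open Polynomial

theorem myDetFinFour {R : Type*} [CommRing R] (A : Matrix (Fin 4) (Fin 4) R) :
    A.det =
      A 0 0 * (A 1 1 * (A 2 2 * A 3 3 - A 2 3 * A 3 2)
              - A 1 2 * (A 2 1 * A 3 3 - A 2 3 * A 3 1)
              + A 1 3 * (A 2 1 * A 3 2 - A 2 2 * A 3 1))
    - A 0 1 * (A 1 0 * (A 2 2 * A 3 3 - A 2 3 * A 3 2)
              - A 1 2 * (A 2 0 * A 3 3 - A 2 3 * A 3 0)
              + A 1 3 * (A 2 0 * A 3 2 - A 2 2 * A 3 0))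
    + A 0 2 * (A 1 0 * (A 2 1 * A 3 3 - A 2 3 * A 3 1)
              - A 1 1 * (A 2 0 * A 3 3 - A 2 3 * A 3 0)
              + A 1 3 * (A 2 0 * A 3 1 - A 2 1 * A 3 0))
    - A 0 3 * (A 1 0 * (A 2 1 * A 3 2 - A 2 2 * A 3 1)
              - A 1 1 * (A 2 0 * A 3 2 - A 2 2 * A 3 0)
              + A 1 2 * (A 2 0 * A 3 1 - A 2 1 * A 3 0)) := by
  rw [Matrix.det_succ_row_zero, Fin.sum_univ_four]
  simp [Matrix.det_fin_three, Matrix.submatrix_apply, Fin.succAbove, Fin.lt_def,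
    show (Fin.succ 2 : Fin 4) = 3 from rfl, show ((3:Fin 4) : ℕ) = 3 from rfl,
    show (Fin.castSucc 2 : Fin 4) = 2 from rfl]
  norm_num
  ring

/-- Hyperbolicity and eigenvalues of the reduced shallow viscoelastic model:
the Jacobian matrix in the variables `(h, u, sxx, szz)` has characteristic
polynomial `(X - u)² ((X - u)² - a²)`, eigenvalues `u - a`, `u` (double) and
`u + a`, and is diagonalizable over `ℝ`. -/
theorem reduced_model_hyperbolic
    (g eta_p lam : ℝ) (hg : 0 < g) (hetap : 0 < eta_p) (hlam : 0 < lam)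
    (h u sigma_xx sigma_zz p₃ p₄ : ℝ) (hh : 0 < h)
    (hsxx : 0 < sigma_xx) (hszz : 0 < sigma_zz)
    (asq a : ℝ)
    (hasq : asq = g * h + eta_p / (2 * lam) * (3 * sigma_zz + sigma_xx))
    (ha : a = Real.sqrt asq) :
    0 < a ∧
    (!![u, h, 0, 0;
        asq / h, u, p₃, p₄;
        0, 0, u, 0;
        0, 0, 0, u] : Matrix (Fin 4) (Fin 4) ℝ).charpoly
      = (X - C u) ^ 2 * ((X - C u) ^ 2 - C asq) ∧
    spectrum ℝ
      (!![u, h, 0, 0;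
          asq / h, u, p₃, p₄;
          0, 0, u, 0;
          0, 0, 0, u] : Matrix (Fin 4) (Fin 4) ℝ)
      = {u - a, u, u + a} ∧
    ∃ P : Matrix (Fin 4) (Fin 4) ℝ, IsUnit P ∧
      (P⁻¹ *
        (!![u, h, 0, 0;
            asq / h, u, p₃, p₄;
            0, 0, u, 0;
            0, 0, 0, u] : Matrix (Fin 4) (Fin 4) ℝ) * P).IsDiag := by
  have hasqpos : 0 < asq := by rw [hasq]; positivity
  have hapos : 0 < a := ha ▸ Real.sqrt_pos.mpr hasqpos
  have ha2 : a ^ 2 = asq := by rw [ha, Real.sq_sqrt hasqpos.le]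
  have hhne : h ≠ 0 := hh.ne'
  have hane : a ≠ 0 := hapos.ne'
  have hasqne : asq ≠ 0 := hasqpos.ne'
  set M : Matrix (Fin 4) (Fin 4) ℝ :=
    !![u, h, 0, 0;
       asq / h, u, p₃, p₄;
       0, 0, u, 0;
       0, 0, 0, u] with hM
  have hq : asq / h * h = asq := div_mul_cancel₀ asq hhne
  have hqC : (C (asq / h) : ℝ[X]) * C h = C asq := by rw [← C_mul, hq]
  -- characteristic polynomial
  have hcm : M.charmatrix =
      !![X - C u, -C h, 0, 0;
         -C (asq / h), X - C u, -C p₃, -C p₄;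
         0, 0, X - C u, 0;
         0, 0, 0, X - C u] := by
    ext i j
    fin_cases i <;> fin_cases j <;>
      simp [hM, Matrix.charmatrix_apply, Matrix.diagonal_apply,
        Matrix.vecHead, Matrix.vecTail]
  have hchar : M.charpoly = (X - C u) ^ 2 * ((X - C u) ^ 2 - C asq) := by
    rw [Matrix.charpoly, hcm, myDetFinFour]
    simp [Matrix.vecHead, Matrix.vecTail]
    linear_combination (-(X - C u) ^ 2) * hqC
  refine ⟨hapos, hchar, ?_, ?_⟩
  · -- spectrum
    ext x
    have halg : algebraMap ℝ (Matrix (Fin 4) (Fin 4) ℝ) x - M =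
        !![x - u, -h, 0, 0;
           -(asq / h), x - u, -p₃, -p₄;
           0, 0, x - u, 0;
           0, 0, 0, x - u] := by
      ext i j
      fin_cases i <;> fin_cases j <;>
        simp [hM, Matrix.algebraMap_matrix_apply, Matrix.vecHead, Matrix.vecTail]
    have hdet : (algebraMap ℝ (Matrix (Fin 4) (Fin 4) ℝ) x - M).det
        = (x - u) ^ 2 * ((x - (u + a)) * (x - (u - a))) := by
      rw [halg, myDetFinFour]
      simp [Matrix.vecHead, Matrix.vecTail]
      linear_combination (x - u) ^ 2 * ha2 - (x - u) ^ 2 * hq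
    simp only [spectrum.mem_iff, Matrix.isUnit_iff_isUnit_det, isUnit_iff_ne_zero, not_not,
      hdet, Set.mem_insert_iff, Set.mem_singleton_iff]
    constructor
    · intro hx
      rcases mul_eq_zero.mp hx with h1 | h2
      · right; left
        have := pow_eq_zero_iff (n := 2) (by norm_num) |>.mp h1
        linarith [sub_eq_zero.mp this]
      · rcases mul_eq_zero.mp h2 with h3 | h4
        · right; right; linarith [sub_eq_zero.mp h3]
        · left; linarith [sub_eq_zero.mp h4]
    · rintro (rfl | rfl | rfl)
      · ring
      · ring
      · ring
  · -- diagonalizability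
    set P : Matrix (Fin 4) (Fin 4) ℝ :=
      !![h, h, -(p₃ * h / asq), -(p₄ * h / asq);
         a, -a, 0, 0;
         0, 0, 1, 0;
         0, 0, 0, 1] with hP
    have hPdetval : P.det = -(2 * h * a) := by
      rw [myDetFinFour]
      simp [hP, Matrix.vecHead, Matrix.vecTail]
      ring
    have hPdet : IsUnit P.det := by
      rw [hPdetval, isUnit_iff_ne_zero]
      intro hc
      nlinarith
    refine ⟨P, (Matrix.isUnit_iff_isUnit_det P).mpr hPdet, ?_⟩
    have hMP : M * P = P * Matrix.diagonal ![u + a, u - a, u, u] := by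
      ext i j
      fin_cases i <;> fin_cases j <;>
        simp [hM, hP, Matrix.mul_apply, Fin.sum_univ_four, Matrix.mul_diagonal,
          Matrix.vecHead, Matrix.vecTail, ← ha2]
      all_goals try field_simp
      all_goals try ring
    rw [mul_assoc, hMP, ← mul_assoc, Matrix.nonsing_inv_mul P hPdet, one_mul]
    exact Matrix.isDiag_diagonal _
end

section
/- Choice of relaxation speeds ensuring positivity and the subcharacteristic condition: let g, eta_p, lambda > 0. Let h_l, h_r > 0, u_l, u_r ∈ ℝ, and sigma_xx_l, sigma_zz_l, sigma_xx_r, sigma_zz_r > 0. Define P_l = g h_l²/2 + (eta_p/(2 lambda)) h_l (sigma_zz_l − sigma_xx_l) and P_r analogously; a_l = sqrt( g h_l + (eta_p/(2 lambda)) (3 sigma_zz_l + sigma_xx_l) ) and a_r analogously; c_l = h_l [ a_l + 2 ( max(0, u_l − u_r) + max(0, P_r − P_l)/(h_l a_l + h_r a_r) ) ] and c_r = h_r [ a_r + 2 ( max(0, u_l − u_r) + max(0, P_l − P_r)/(h_l a_l + h_r a_r) ) ]. Then: (i) 1/h_l + ( c_r (u_r − u_l) + P_l − P_r ) / ( c_l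 (c_l + c_r) ) > 0 and 1/h_r + ( c_l (u_r − u_l) + P_r − P_l ) / ( c_r (c_l + c_r) ) > 0, so the intermediate depths h_l* and h_r* defined as the reciprocals of these quantities are positive; (ii) for every h in the closed interval with endpoints h_l and h_l*, h² ( g h + (eta_p/(2 lambda)) ( 3 (h/h_l)² sigma_zz_l + (h_l/h)² sigma_xx_l ) ) ≤ c_l², and for every h in the closed interval with endpoints h_r and h_r*, h² ( g h + (eta_p/(2 lambda)) ( 3 (h/h_r)² sigma_zz_r + (h_r/h)² sigma_xx_r ) ) ≤ c_r². -/
private lemma speed_lb (h1 a1 M N1 c1 : ℝ) (hh1 : 0 < h1) (hM : 0 ≤ M) (hN1 : 0 ≤ N1)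
    (hc1 : c1 = h1 * (a1 + 2 * (M + N1))) : h1 * a1 ≤ c1 := by
  rw [hc1]; nlinarith

private lemma X_lb (M N1 c1 c2 d P1 P2 h1 h2 a1 a2 : ℝ) (hM : 0 ≤ M) (hN1 : 0 ≤ N1)
    (c1pos : 0 < c1) (c2pos : 0 < c2)
    (hDle : h1 * a1 + h2 * a2 ≤ c1 + c2)
    (hmd : c2 * (-d) ≤ c2 * M)
    (hP21 : P2 - P1 ≤ N1 * (h1 * a1 + h2 * a2)) :
    -((M + N1) * (c1 + c2)) ≤ c2 * d + P1 - P2 := by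
  nlinarith [mul_le_mul_of_nonneg_left hDle hN1, mul_nonneg hM c1pos.le,
    mul_nonneg hM c2pos.le]

private lemma frac_lb (M N1 c1 c2 X : ℝ) (c1pos : 0 < c1) (ccpos : 0 < c1 + c2)
    (hX : -((M + N1) * (c1 + c2)) ≤ X) :
    -((M + N1) / c1) ≤ X / (c1 * (c1 + c2)) := by
  rw [neg_div', div_le_div_iff₀ c1pos (by positivity)]
  nlinarith [mul_le_mul_of_nonneg_right hX c1pos.le]

private lemma poly_le_A (g k szz1 sxx1 h h1 c1 a1 : ℝ) (hg : 0 < g) (hk : 0 < k)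
    (hszz1 : 0 < szz1) (hsxx1 : 0 < sxx1) (hh1 : 0 < h1) (hp : 0 < h) (hle : h ≤ h1)
    (ha1sq : a1 ^ 2 = g * h1 + k * (3 * szz1 + sxx1))
    (hc1sq : (h1 * a1) ^ 2 ≤ c1 ^ 2) :
    g * h ^ 3 * h1 ^ 2 + 3 * k * szz1 * h ^ 4 + k * sxx1 * h1 ^ 4 ≤ c1 ^ 2 * h1 ^ 2 := by
  have ha1e : (h1 * a1) ^ 2 = h1 ^ 2 * (g * h1 + k * (3 * szz1 + sxx1)) := by
    rw [mul_pow, ha1sq]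
  have h3 : h ^ 3 ≤ h1 ^ 3 := pow_le_pow_left₀ hp.le hle 3
  have h4 : h ^ 4 ≤ h1 ^ 4 := pow_le_pow_left₀ hp.le hle 4
  nlinarith [mul_le_mul_of_nonneg_left h3 (by positivity : (0:ℝ) ≤ g * h1 ^ 2),
    mul_le_mul_of_nonneg_left h4 (by positivity : (0:ℝ) ≤ 3 * k * szz1),
    mul_le_mul_of_nonneg_right (ha1e ▸ hc1sq) (by positivity : (0:ℝ) ≤ h1 ^ 2)]

private lemma poly_le_B (g k szz1 sxx1 h h1 c1 a1 : ℝ) (hg : 0 < g) (hk : 0 < k)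
    (hszz1 : 0 < szz1) (hsxx1 : 0 < sxx1) (hh1 : 0 < h1) (a1pos : 0 < a1)
    (c1pos : 0 < c1) (hge : h1 ≤ h)
    (ha1sq : a1 ^ 2 = g * h1 + k * (3 * szz1 + sxx1))
    (hhb : h * (c1 + h1 * a1) ≤ 2 * h1 * c1) :
    g * h ^ 3 * h1 ^ 2 + 3 * k * szz1 * h ^ 4 + k * sxx1 * h1 ^ 4 ≤ c1 ^ 2 * h1 ^ 2 := by
  have hp : 0 < h := lt_of_lt_of_le hh1 hge
  have e1 : g * h ^ 3 * h1 ^ 2 ≤ g * h1 * h ^ 4 := by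
    nlinarith [mul_nonneg (mul_nonneg (mul_nonneg hg.le hh1.le) (pow_pos hp 3).le)
      (sub_nonneg.mpr hge)]
  have e2 : k * sxx1 * h1 ^ 4 ≤ k * sxx1 * h ^ 4 :=
    mul_le_mul_of_nonneg_left (pow_le_pow_left₀ hh1.le hge 4) (by positivity)
  have step1 : g * h ^ 3 * h1 ^ 2 + 3 * k * szz1 * h ^ 4 + k * sxx1 * h1 ^ 4
      ≤ a1 ^ 2 * h ^ 4 := by
    have ha1h : a1 ^ 2 * h ^ 4 = (g * h1 + k * (3 * szz1 + sxx1)) * h ^ 4 := by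
      rw [ha1sq]
    rw [ha1h]; nlinarith [e1, e2]
  have hsq : (h * (c1 + h1 * a1)) ^ 2 ≤ (2 * h1 * c1) ^ 2 :=
    pow_le_pow_left₀ (by positivity) hhb 2
  have hb2 : h1 * a1 * h ^ 2 ≤ c1 * h1 ^ 2 := by
    have key : h1 * a1 * h ^ 2 * (c1 + h1 * a1) ^ 2 ≤
        c1 * h1 ^ 2 * (c1 + h1 * a1) ^ 2 := by
      nlinarith [mul_nonneg (mul_nonneg (mul_pos c1pos hh1).le hh1.le)
          (sq_nonneg (c1 - h1 * a1)),
        mul_nonneg (mul_pos hh1 a1pos).le (sub_nonneg.mpr hsq)]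
    exact le_of_mul_le_mul_right key (by positivity)
  have hb4 : (h1 * a1 * h ^ 2) ^ 2 ≤ (c1 * h1 ^ 2) ^ 2 :=
    pow_le_pow_left₀ (by positivity) hb2 2
  have step2 : a1 ^ 2 * h ^ 4 ≤ c1 ^ 2 * h1 ^ 2 := by
    have h5 : a1 ^ 2 * h ^ 4 * h1 ^ 2 ≤ c1 ^ 2 * h1 ^ 2 * h1 ^ 2 := by
      nlinarith [hb4]
    exact le_of_mul_le_mul_right h5 (by positivity)
  linarith

private lemma aux_side (g k : ℝ) (hg : 0 < g) (hk : 0 < k)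
    (h1 h2 sxx1 szz1 sxx2 szz2 : ℝ)
    (hh1 : 0 < h1) (hh2 : 0 < h2)
    (hsxx1 : 0 < sxx1) (hszz1 : 0 < szz1) (hsxx2 : 0 < sxx2) (hszz2 : 0 < szz2)
    (d P1 P2 a1 a2 c1 c2 i1 : ℝ)
    (ha1 : a1 = Real.sqrt (g * h1 + k * (3 * szz1 + sxx1)))
    (ha2 : a2 = Real.sqrt (g * h2 + k * (3 * szz2 + sxx2)))
    (hc1 : c1 = h1 * (a1 + 2 * (max 0 (-d) + max 0 (P2 - P1) / (h1 * a1 + h2 * a2))))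
    (hc2 : c2 = h2 * (a2 + 2 * (max 0 (-d) + max 0 (P1 - P2) / (h1 * a1 + h2 * a2))))
    (hi1 : i1 = 1 / h1 + (c2 * d + P1 - P2) / (c1 * (c1 + c2))) :
    0 < i1 ∧ ∀ h ∈ Set.uIcc h1 i1⁻¹,
      h ^ 2 * (g * h + k * (3 * (h / h1) ^ 2 * szz1 + (h1 / h) ^ 2 * sxx1)) ≤ c1 ^ 2 := by
  have a1pos : 0 < a1 := by
    rw [ha1]; exact Real.sqrt_pos.mpr (by positivity)
  have a2pos : 0 < a2 := by
    rw [ha2]; exact Real.sqrt_pos.mpr (by positivity)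
  have ha1sq : a1 ^ 2 = g * h1 + k * (3 * szz1 + sxx1) := by
    rw [ha1]; exact Real.sq_sqrt (by positivity)
  have hD : 0 < h1 * a1 + h2 * a2 := by positivity
  set M : ℝ := max 0 (-d) with hMdef
  set N1 : ℝ := max 0 (P2 - P1) / (h1 * a1 + h2 * a2) with hN1def
  set N2 : ℝ := max 0 (P1 - P2) / (h1 * a1 + h2 * a2) with hN2def
  have hM : 0 ≤ M := le_max_left _ _
  have hN1 : 0 ≤ N1 := div_nonneg (le_max_left _ _) hD.le
  have hN2 : 0 ≤ N2 := div_nonneg (le_max_left _ _) hD.le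
  have hc1lb : h1 * a1 ≤ c1 := speed_lb h1 a1 M N1 c1 hh1 hM hN1 hc1
  have hc2lb : h2 * a2 ≤ c2 := speed_lb h2 a2 M N2 c2 hh2 hM hN2 hc2
  have c1pos : 0 < c1 := lt_of_lt_of_le (by positivity) hc1lb
  have c2pos : 0 < c2 := lt_of_lt_of_le (by positivity) hc2lb
  have ccpos : 0 < c1 + c2 := by linarith
  have hDle : h1 * a1 + h2 * a2 ≤ c1 + c2 := by linarith
  have hP21 : P2 - P1 ≤ N1 * (h1 * a1 + h2 * a2) := by
    rw [hN1def, div_mul_cancel₀ _ hD.ne']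
    exact le_max_right _ _
  have hmd : c2 * (-d) ≤ c2 * M :=
    mul_le_mul_of_nonneg_left (le_max_right _ _) c2pos.le
  have hX : -((M + N1) * (c1 + c2)) ≤ c2 * d + P1 - P2 :=
    X_lb M N1 c1 c2 d P1 P2 h1 h2 a1 a2 hM hN1 c1pos c2pos hDle hmd hP21
  have hstep : 1 / h1 - (M + N1) / c1 ≤ i1 := by
    rw [hi1]
    have hfr := frac_lb M N1 c1 c2 (c2 * d + P1 - P2) c1pos ccpos hX
    linarith
  have hMN : M + N1 = (c1 - h1 * a1) / (2 * h1) := by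
    rw [hc1]; field_simp; ring
  have heq : 1 / h1 - (M + N1) / c1 = (c1 + h1 * a1) / (2 * h1 * c1) := by
    rw [hMN]; field_simp; ring
  have hlow : (c1 + h1 * a1) / (2 * h1 * c1) ≤ i1 := heq ▸ hstep
  have hi1pos : 0 < i1 := lt_of_lt_of_le (by positivity) hlow
  refine ⟨hi1pos, ?_⟩
  have hinv : i1⁻¹ ≤ 2 * h1 * c1 / (c1 + h1 * a1) := by
    have h1' : i1⁻¹ ≤ ((c1 + h1 * a1) / (2 * h1 * c1))⁻¹ :=
      inv_anti₀ (by positivity) hlow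
    rwa [inv_div] at h1'
  have hH1 : h1 ≤ 2 * h1 * c1 / (c1 + h1 * a1) := by
    rw [le_div_iff₀ (by positivity)]
    have := mul_le_mul_of_nonneg_left hc1lb hh1.le
    linarith [this]
  intro h hh
  rcases Set.mem_uIcc.mp hh with ⟨hlo, hhi⟩ | ⟨hlo, hhi⟩
  · rcases le_total h h1 with hcase | hcase
    · have hp : 0 < h := lt_of_lt_of_le hh1 hlo
      have hfe : h ^ 2 * (g * h + k * (3 * (h / h1) ^ 2 * szz1 + (h1 / h) ^ 2 * sxx1)) =
          (g * h ^ 3 * h1 ^ 2 + 3 * k * szz1 * h ^ 4 + k * sxx1 * h1 ^ 4) / h1 ^ 2 := by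
        field_simp; ring
      rw [hfe, div_le_iff₀ (by positivity)]
      exact poly_le_A g k szz1 sxx1 h h1 c1 a1 hg hk hszz1 hsxx1 hh1 hp hcase ha1sq
        (pow_le_pow_left₀ (by positivity) hc1lb 2)
    · have hp : 0 < h := lt_of_lt_of_le hh1 hcase
      have hfe : h ^ 2 * (g * h + k * (3 * (h / h1) ^ 2 * szz1 + (h1 / h) ^ 2 * sxx1)) =
          (g * h ^ 3 * h1 ^ 2 + 3 * k * szz1 * h ^ 4 + k * sxx1 * h1 ^ 4) / h1 ^ 2 := by
        field_simp; ring
      rw [hfe, div_le_iff₀ (by positivity)]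
      have hle2 : h ≤ 2 * h1 * c1 / (c1 + h1 * a1) := le_trans hhi hinv
      have hhb : h * (c1 + h1 * a1) ≤ 2 * h1 * c1 :=
        (le_div_iff₀ (by positivity)).mp hle2
      exact poly_le_B g k szz1 sxx1 h h1 c1 a1 hg hk hszz1 hsxx1 hh1 a1pos c1pos
        hcase ha1sq hhb
  · have hp : 0 < h := lt_of_lt_of_le (inv_pos.mpr hi1pos) hlo
    have hfe : h ^ 2 * (g * h + k * (3 * (h / h1) ^ 2 * szz1 + (h1 / h) ^ 2 * sxx1)) =
        (g * h ^ 3 * h1 ^ 2 + 3 * k * szz1 * h ^ 4 + k * sxx1 * h1 ^ 4) / h1 ^ 2 := by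
      field_simp; ring
    rw [hfe, div_le_iff₀ (by positivity)]
    exact poly_le_A g k szz1 sxx1 h h1 c1 a1 hg hk hszz1 hsxx1 hh1 hp hhi ha1sq
      (pow_le_pow_left₀ (by positivity) hc1lb 2)

/-- Choice of relaxation speeds ensuring positivity of the intermediate depths
and the subcharacteristic condition. -/
theorem relaxation_speeds_subcharacteristic
    (g eta_p lam : ℝ) (hg : 0 < g) (hetap : 0 < eta_p) (hlam : 0 < lam)
    (h_l h_r u_l u_r sxx_l szz_l sxx_r szz_r : ℝ)
    (hhl : 0 < h_l) (hhr : 0 < h_r)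
    (hsxxl : 0 < sxx_l) (hszzl : 0 < szz_l) (hsxxr : 0 < sxx_r) (hszzr : 0 < szz_r)
    (P_l P_r a_l a_r c_l c_r i_l i_r : ℝ)
    (hPl : P_l = g * h_l ^ 2 / 2 + eta_p / (2 * lam) * h_l * (szz_l - sxx_l))
    (hPr : P_r = g * h_r ^ 2 / 2 + eta_p / (2 * lam) * h_r * (szz_r - sxx_r))
    (hal : a_l = Real.sqrt (g * h_l + eta_p / (2 * lam) * (3 * szz_l + sxx_l)))
    (har : a_r = Real.sqrt (g * h_r + eta_p / (2 * lam) * (3 * szz_r + sxx_r)))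
    (hcl : c_l = h_l * (a_l + 2 * (max 0 (u_l - u_r) +
      max 0 (P_r - P_l) / (h_l * a_l + h_r * a_r))))
    (hcr : c_r = h_r * (a_r + 2 * (max 0 (u_l - u_r) +
      max 0 (P_l - P_r) / (h_l * a_l + h_r * a_r))))
    (hil : i_l = 1 / h_l + (c_r * (u_r - u_l) + P_l - P_r) / (c_l * (c_l + c_r)))
    (hir : i_r = 1 / h_r + (c_l * (u_r - u_l) + P_r - P_l) / (c_r * (c_l + c_r))) :
    (0 < i_l ∧ 0 < i_r) ∧
    (∀ h ∈ Set.uIcc h_l i_l⁻¹,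
      h ^ 2 * (g * h + eta_p / (2 * lam) *
        (3 * (h / h_l) ^ 2 * szz_l + (h_l / h) ^ 2 * sxx_l)) ≤ c_l ^ 2) ∧
    (∀ h ∈ Set.uIcc h_r i_r⁻¹,
      h ^ 2 * (g * h + eta_p / (2 * lam) *
        (3 * (h / h_r) ^ 2 * szz_r + (h_r / h) ^ 2 * sxx_r)) ≤ c_r ^ 2) := by
  set k : ℝ := eta_p / (2 * lam) with hk
  have hkpos : 0 < k := by positivity
  have hcl' : c_l = h_l * (a_l + 2 * (max 0 (-(u_r - u_l)) +
      max 0 (P_r - P_l) / (h_l * a_l + h_r * a_r))) := by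
    rw [hcl, neg_sub]
  have hcr' : c_r = h_r * (a_r + 2 * (max 0 (-(u_r - u_l)) +
      max 0 (P_l - P_r) / (h_l * a_l + h_r * a_r))) := by
    rw [hcr, neg_sub]
  obtain ⟨hilpos, hilsub⟩ := aux_side g k hg hkpos h_l h_r sxx_l szz_l sxx_r szz_r
    hhl hhr hsxxl hszzl hsxxr hszzr (u_r - u_l) P_l P_r a_l a_r c_l c_r i_l
    hal har hcl' hcr' hil
  have hcr'' : c_r = h_r * (a_r + 2 * (max 0 (-(u_r - u_l)) +
      max 0 (P_l - P_r) / (h_r * a_r + h_l * a_l))) := by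
    rw [hcr', add_comm (h_l * a_l)]
  have hcl'' : c_l = h_l * (a_l + 2 * (max 0 (-(u_r - u_l)) +
      max 0 (P_r - P_l) / (h_r * a_r + h_l * a_l))) := by
    rw [hcl', add_comm (h_l * a_l)]
  have hir' : i_r = 1 / h_r + (c_l * (u_r - u_l) + P_r - P_l) / (c_r * (c_r + c_l)) := by
    rw [hir, add_comm c_l c_r]
  obtain ⟨hirpos, hirsub⟩ := aux_side g k hg hkpos h_r h_l sxx_r szz_r sxx_l szz_l
    hhr hhl hsxxr hszzr hsxxl hszzl (u_r - u_l) P_r P_l a_r a_l c_r c_l i_r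
    har hal hcr'' hcl'' hir'
  exact ⟨⟨hilpos, hirpos⟩, hilsub, hirsub⟩
end

section
/- Uniform bound on the relaxation propagation speeds: there exists an absolute constant C > 0 such that for all g, eta_p, lambda > 0, all h_l, h_r > 0, u_l, u_r ∈ ℝ and sigma_xx_l, sigma_zz_l, sigma_xx_r, sigma_zz_r > 0, defining P_l = g h_l²/2 + (eta_p/(2 lambda)) h_l (sigma_zz_l − sigma_xx_l), P_r analogously, a_l = sqrt( g h_l + (eta_p/(2 lambda)) (3 sigma_zz_l + sigma_xx_l) ), a_r analogously, c_l = h_l [ a_l + 2 ( max(0, u_l − u_r) + max(0, P_r − P_l)/(h_l a_l + h_r a_r) ) ] and c_r = h_r [ a_r + 2 ( max(0, u_l − u_r) + max(0, P_l − P_r)/(h_l a_l + h_r a_r) ) ], one has max( c_l/h_l , c_r/h_r ) ≤ C ( |u_l| + |u_r| + a_l + a_r ). -/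
set_option maxHeartbeats 1000000 in
/-- Uniform bound on the relaxation propagation speeds: there is an absolute
constant `C` such that `max (c_l/h_l) (c_r/h_r) ≤ C (|u_l| + |u_r| + a_l + a_r)`. -/
theorem relaxation_speeds_bound :
    ∃ C : ℝ, 0 < C ∧
      ∀ g eta_p lam h_l h_r u_l u_r sxx_l szz_l sxx_r szz_r
        P_l P_r a_l a_r c_l c_r : ℝ,
        0 < g → 0 < eta_p → 0 < lam → 0 < h_l → 0 < h_r →
        0 < sxx_l → 0 < szz_l → 0 < sxx_r → 0 < szz_r →
        P_l = g * h_l ^ 2 / 2 + eta_p / (2 * lam) * h_l * (szz_l - sxx_l) →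
        P_r = g * h_r ^ 2 / 2 + eta_p / (2 * lam) * h_r * (szz_r - sxx_r) →
        a_l = Real.sqrt (g * h_l + eta_p / (2 * lam) * (3 * szz_l + sxx_l)) →
        a_r = Real.sqrt (g * h_r + eta_p / (2 * lam) * (3 * szz_r + sxx_r)) →
        c_l = h_l * (a_l + 2 * (max 0 (u_l - u_r) +
          max 0 (P_r - P_l) / (h_l * a_l + h_r * a_r))) →
        c_r = h_r * (a_r + 2 * (max 0 (u_l - u_r) +
          max 0 (P_l - P_r) / (h_l * a_l + h_r * a_r))) →
        max (c_l / h_l) (c_r / h_r) ≤ C * (|u_l| + |u_r| + a_l + a_r) := by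
  refine ⟨3, by norm_num, ?_⟩
  intro g eta_p lam h_l h_r u_l u_r sxx_l szz_l sxx_r szz_r P_l P_r a_l a_r c_l c_r
  intro hg he hlam hhl hhr hx1 hz1 hx2 hz2 hPl hPr hal har hcl hcr
  have hkpos : 0 < eta_p / (2 * lam) := by positivity
  set k := eta_p / (2 * lam) with hk
  have halpos : 0 < a_l := by rw [hal]; apply Real.sqrt_pos.2; positivity
  have harpos : 0 < a_r := by rw [har]; apply Real.sqrt_pos.2; positivity
  have hal2 : a_l ^ 2 = g * h_l + k * (3 * szz_l + sxx_l) := by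
    rw [hal, Real.sq_sqrt]; positivity
  have har2 : a_r ^ 2 = g * h_r + k * (3 * szz_r + sxx_r) := by
    rw [har, Real.sq_sqrt]; positivity
  have hD : 0 < h_l * a_l + h_r * a_r := by positivity
  have key : ∀ x : ℝ, x ≤ h_l * a_l ^ 2 + h_r * a_r ^ 2 →
      max 0 x / (h_l * a_l + h_r * a_r) ≤ a_l + a_r := by
    intro x hx
    rw [div_le_iff₀ hD]
    have hcross : h_l * a_l ^ 2 + h_r * a_r ^ 2 ≤ (a_l + a_r) * (h_l * a_l + h_r * a_r) := by
      have c1 : 0 ≤ h_l * a_l * a_r := by positivity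
      have c2 : 0 ≤ h_r * a_r * a_l := by positivity
      nlinarith
    rcases max_cases 0 x with ⟨h1, _⟩ | ⟨h1, _⟩ <;> rw [h1]
    · positivity
    · linarith
  have hPrle : P_r ≤ h_r * a_r ^ 2 := by
    rw [hPr, har2]
    have : (0:ℝ) ≤ g * h_r ^ 2 / 2 + 2 * (k * (h_r * szz_r)) + 2 * (k * (h_r * sxx_r)) := by
      positivity
    linarith
  have hPlle : P_l ≤ h_l * a_l ^ 2 := by
    rw [hPl, hal2]
    have : (0:ℝ) ≤ g * h_l ^ 2 / 2 + 2 * (k * (h_l * szz_l)) + 2 * (k * (h_l * sxx_l)) := by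
      positivity
    linarith
  have hPrge : -P_r ≤ h_r * a_r ^ 2 := by
    rw [hPr, har2]
    have : (0:ℝ) ≤ 3 / 2 * (g * h_r ^ 2) + 4 * (k * (h_r * szz_r)) := by positivity
    linarith
  have hPlge : -P_l ≤ h_l * a_l ^ 2 := by
    rw [hPl, hal2]
    have : (0:ℝ) ≤ 3 / 2 * (g * h_l ^ 2) + 4 * (k * (h_l * szz_l)) := by positivity
    linarith
  have h1 : max 0 (P_r - P_l) / (h_l * a_l + h_r * a_r) ≤ a_l + a_r := by
    apply key; linarith
  have h2 : max 0 (P_l - P_r) / (h_l * a_l + h_r * a_r) ≤ a_l + a_r := by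
    apply key; linarith
  have hu : max 0 (u_l - u_r) ≤ |u_l| + |u_r| := by
    apply max_le (by positivity)
    have := le_abs_self u_l
    have := neg_abs_le u_r
    linarith
  have hcl' : c_l / h_l = a_l + 2 * (max 0 (u_l - u_r) +
      max 0 (P_r - P_l) / (h_l * a_l + h_r * a_r)) := by
    rw [hcl, mul_div_cancel_left₀ _ hhl.ne']
  have hcr' : c_r / h_r = a_r + 2 * (max 0 (u_l - u_r) +
      max 0 (P_l - P_r) / (h_l * a_l + h_r * a_r)) := by
    rw [hcr, mul_div_cancel_left₀ _ hhr.ne']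
  have hul := abs_nonneg u_l
  have hur := abs_nonneg u_r
  apply max_le <;> [rw [hcl']; rw [hcr']] <;> linarith
end

section
/- Hydrostatic reconstruction at rest: let h_l, h_r ≥ 0 and b_l, b_r ∈ ℝ, set Δb = b_r − b_l, h_l♯ = max( h_l − max(Δb, 0), 0 ) and h_r♯ = max( h_r − max(−Δb, 0), 0 ). If h_l + b_l = h_r + b_r, then h_l♯ = h_r♯ = min(h_l, h_r). -/
/-- Hydrostatic reconstruction at rest: for data at rest (`h_l + b_l = h_r + b_r`)
the two reconstructed depths coincide and equal `min h_l h_r`. -/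
theorem hydrostatic_reconstruction_at_rest
    (h_l h_r b_l b_r : ℝ) (hhl : 0 ≤ h_l) (hhr : 0 ≤ h_r)
    (hrest : h_l + b_l = h_r + b_r) :
    max (h_l - max (b_r - b_l) 0) 0 = min h_l h_r ∧
    max (h_r - max (-(b_r - b_l)) 0) 0 = min h_l h_r := by
  rcases le_total (b_r - b_l) 0 with h | h
  · have h1 : max (b_r - b_l) 0 = 0 := max_eq_right h
    have h2 : max (-(b_r - b_l)) 0 = -(b_r - b_l) := max_eq_left (by linarith)
    have h3 : h_l ≤ h_r := by linarith
    rw [h1, h2, min_eq_left h3]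
    constructor
    · rw [sub_zero, max_eq_left hhl]
    · rw [max_eq_left (by linarith)]; linarith
  · have h1 : max (b_r - b_l) 0 = b_r - b_l := max_eq_left h
    have h2 : max (-(b_r - b_l)) 0 = 0 := max_eq_right (by linarith)
    have h3 : h_r ≤ h_l := by linarith
    rw [h1, h2, min_eq_right h3]
    constructor
    · rw [max_eq_left (by linarith)]; linarith
    · rw [sub_zero, max_eq_left hhr]
end

section
/- Positivity of the conformation variables along characteristics: let lambda > 0, let a : ℝ → ℝ be continuous, and let sigma : [0, ∞) → ℝ be differentiable with sigma'(t) = a(t) sigma(t) + (1 − sigma(t))/lambda for all t ≥ 0 and sigma(0) > 0. Then sigma(t) > 0 for all t ≥ 0. -/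
/-- Positivity of the conformation variables along characteristics: a solution of
`σ' = a(t) σ + (1 - σ)/λ` on `[0, ∞)` with positive initial data stays positive. -/
theorem conformation_positive_along_characteristics
    (lam : ℝ) (hlam : 0 < lam)
    (a : ℝ → ℝ) (ha : Continuous a)
    (sigma : ℝ → ℝ)
    (hderiv : ∀ t : ℝ, 0 ≤ t →
      HasDerivWithinAt sigma (a t * sigma t + (1 - sigma t) / lam) (Set.Ici 0) t)
    (h0 : 0 < sigma 0) :
    ∀ t : ℝ, 0 ≤ t → 0 < sigma t := by
  intro t ht
  by_contra hneg
  push_neg at hneg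
  set S : Set ℝ := {s | 0 ≤ s ∧ sigma s ≤ 0} with hS
  have hcont : ContinuousOn sigma (Set.Ici 0) := fun s hs =>
    (hderiv s hs).continuousWithinAt
  have hSne : S.Nonempty := ⟨t, ht, hneg⟩
  have hSbdd : BddBelow S := ⟨0, fun s hs => hs.1⟩
  have hSclosed : IsClosed S := by
    have hEq : S = Set.Ici 0 ∩ sigma ⁻¹' Set.Iic 0 := by
      ext s; simp [hS, Set.mem_setOf_eq]
    rw [hEq]
    exact hcont.preimage_isClosed_of_isClosed isClosed_Ici isClosed_Iic
  set t₀ := sInf S with ht₀def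
  have ht₀mem : t₀ ∈ S := hSclosed.csInf_mem hSne hSbdd
  have ht₀0 : 0 ≤ t₀ := ht₀mem.1
  have hpos : ∀ s, 0 ≤ s → s < t₀ → 0 < sigma s := by
    intro s hs hst
    by_contra h
    push_neg at h
    exact absurd (csInf_le hSbdd ⟨hs, h⟩) (not_le.mpr hst)
  have ht₀pos : 0 < t₀ := by
    rcases ht₀0.lt_or_eq with h | h
    · exact h
    · exact absurd ht₀mem.2 (not_le.mpr (h ▸ h0))
  have hfilter : Filter.NeBot (nhdsWithin t₀ (Set.Ioo 0 t₀)) := by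
    rw [nhdsWithin_Ioo_eq_nhdsLT ht₀pos]
    infer_instance
  have hcw : ContinuousWithinAt sigma (Set.Ioo 0 t₀) t₀ :=
    (hcont t₀ ht₀0).mono (fun s hs => hs.1.le)
  have hge : 0 ≤ sigma t₀ := by
    refine ge_of_tendsto hcw.tendsto ?_
    filter_upwards [self_mem_nhdsWithin] with s hs
    exact (hpos s hs.1.le hs.2).le
  have hsig0 : sigma t₀ = 0 := le_antisymm ht₀mem.2 hge
  have hd' : HasDerivWithinAt sigma (1 / lam) (Set.Ici 0) t₀ := by
    have hd := hderiv t₀ ht₀0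
    rw [hsig0] at hd
    simpa using hd
  have hslope := hasDerivWithinAt_iff_tendsto_slope.mp hd'
  have hslope' : Filter.Tendsto (slope sigma t₀) (nhdsWithin t₀ (Set.Ioo 0 t₀))
      (nhds (1 / lam)) :=
    hslope.mono_left (nhdsWithin_mono _ (fun s hs => ⟨hs.1.le, ne_of_lt hs.2⟩))
  have hle : 1 / lam ≤ 0 := by
    refine le_of_tendsto hslope' ?_
    filter_upwards [self_mem_nhdsWithin] with s hs
    have h1 : 0 < sigma s := hpos s hs.1.le hs.2
    have h2 : slope sigma t₀ s = (sigma s - sigma t₀) / (s - t₀) := slope_def_field ..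
    rw [h2, hsig0, sub_zero]
    exact div_nonpos_of_nonneg_of_nonpos h1.le (by linarith [hs.2])
  linarith [one_div_pos.mpr hlam]
end

section
/- Convexity of entropies in s_xx: let phi : (0, ∞) → ℝ be twice continuously differentiable with 0 ≤ phi'(s) ≤ s·phi''(s) for all s > 0. Then the function (q₁, q₃) ↦ q₁ · phi( (q₁ q₃)^{−1/2} ) is convex on (0, ∞) × (0, ∞). -/
open Set

private lemma cube_rpow {w : ℝ} (hw : 0 < w) :
    w ^ (-(1/2) - 1 : ℝ) = (w ^ (-(1/2) : ℝ))^3 := by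
  rw [← Real.rpow_natCast (w ^ (-(1/2):ℝ)) 3, ← Real.rpow_mul hw.le]
  norm_num

private lemma sq_rpow {w : ℝ} (hw : 0 < w) :
    (w ^ (-(1/2) : ℝ))^2 * w = 1 := by
  rw [← Real.rpow_natCast (w ^ (-(1/2):ℝ)) 2, ← Real.rpow_mul hw.le]
  norm_num [Real.rpow_neg_one]
  exact inv_mul_cancel₀ hw.ne'

private lemma key_1d (phi phi' phi'' : ℝ → ℝ)
    (hd1 : ∀ x : ℝ, 0 < x → HasDerivAt phi (phi' x) x)
    (hd2 : ∀ x : ℝ, 0 < x → HasDerivAt phi' (phi'' x) x)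
    (hcond : ∀ s : ℝ, 0 < s → 0 ≤ phi' s ∧ phi' s ≤ s * phi'' s)
    (a b c d : ℝ) (hpos : ∀ t ∈ Icc (0:ℝ) 1, 0 < a + t*c ∧ 0 < b + t*d) :
    ConvexOn ℝ (Icc (0:ℝ) 1)
      (fun t => (a + t*c) * phi (((a+t*c)*(b+t*d)) ^ (-(1/2) : ℝ))) := by
  set S : ℝ → ℝ := fun t => ((a+t*c)*(b+t*d)) ^ (-(1/2) : ℝ) with hSdef
  set sd : ℝ → ℝ := fun t => -(1/2) * (S t)^3 * (c*(b+t*d) + (a+t*c)*d) with hsddef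
  set H : ℝ → ℝ := fun t => c * phi (S t) + ((a+t*c) * phi' (S t)) * sd t with hHdef
  set sd' : ℝ → ℝ := fun t =>
    -(1/2) * ((3*(S t)^2 * sd t) * (c*(b+t*d) + (a+t*c)*d) + (S t)^3 * (c*d + c*d)) with hsd'def
  set G : ℝ → ℝ := fun t => c * (phi' (S t) * sd t) +
    ((c * phi' (S t) + (a+t*c) * (phi'' (S t) * sd t)) * sd t
      + ((a+t*c) * phi' (S t)) * sd' t) with hGdef
  -- basic derivative facts at a point with positivity
  have hu : ∀ t : ℝ, HasDerivAt (fun t => a + t*c) c t := by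
    intro t; simpa using ((hasDerivAt_id t).mul_const c).const_add a
  have hv : ∀ t : ℝ, HasDerivAt (fun t => b + t*d) d t := by
    intro t; simpa using ((hasDerivAt_id t).mul_const d).const_add b
  have hw : ∀ t : ℝ, HasDerivAt (fun t => (a+t*c)*(b+t*d)) (c*(b+t*d) + (a+t*c)*d) t := by
    intro t; exact (hu t).mul (hv t)
  have hS : ∀ t : ℝ, 0 < a + t*c → 0 < b + t*d → HasDerivAt S (sd t) t := by
    intro t hU hV
    have hW : 0 < (a+t*c)*(b+t*d) := mul_pos hU hV
    have := (hw t).rpow_const (p := (-(1/2) : ℝ)) (Or.inl hW.ne')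
    convert this using 1
    simp only [hsddef, hSdef]
    rw [cube_rpow hW]; ring
  have hSpos : ∀ t : ℝ, 0 < a + t*c → 0 < b + t*d → 0 < S t := by
    intro t hU hV
    exact Real.rpow_pos_of_pos (mul_pos hU hV) _
  have hf : ∀ t : ℝ, 0 < a + t*c → 0 < b + t*d →
      HasDerivAt (fun t => (a + t*c) * phi (S t)) (H t) t := by
    intro t hU hV
    have hcomp : HasDerivAt (fun t => phi (S t)) (phi' (S t) * sd t) t :=
      (hd1 (S t) (hSpos t hU hV)).comp t (hS t hU hV)
    have := (hu t).mul hcomp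
    exact this.congr_deriv (by simp only [hHdef]; ring)
  have hH : ∀ t : ℝ, 0 < a + t*c → 0 < b + t*d → HasDerivAt H (G t) t := by
    intro t hU hV
    have hcomp : HasDerivAt (fun t => phi (S t)) (phi' (S t) * sd t) t :=
      (hd1 (S t) (hSpos t hU hV)).comp t (hS t hU hV)
    have hcomp' : HasDerivAt (fun t => phi' (S t)) (phi'' (S t) * sd t) t :=
      (hd2 (S t) (hSpos t hU hV)).comp t (hS t hU hV)
    have hS3 : HasDerivAt (fun t => (S t)^3) (3*(S t)^2 * sd t) t := by
      have := (hS t hU hV).pow 3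
      exact this.congr_deriv (by norm_num)
    have hWp : HasDerivAt (fun t => c*(b+t*d) + (a+t*c)*d) (c*d + c*d) t :=
      ((hv t).const_mul c).add ((hu t).mul_const d)
    have hsd : HasDerivAt sd (sd' t) t := by
      have := ((hS3.const_mul (-(1/2) : ℝ)).mul hWp)
      exact this.congr_deriv (by simp only [hsd'def]; ring)
    have h2 : HasDerivAt (fun t => ((a+t*c) * phi' (S t)) * sd t)
        ((c * phi' (S t) + (a+t*c) * (phi'' (S t) * sd t)) * sd t
          + ((a+t*c) * phi' (S t)) * sd' t) t :=
      ((hu t).mul hcomp').mul hsd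
    exact ((hcomp.const_mul c).add h2)
  have hGnonneg : ∀ t : ℝ, 0 < a + t*c → 0 < b + t*d → 0 ≤ G t := by
    intro t hU hV
    have hW : 0 < (a+t*c)*(b+t*d) := mul_pos hU hV
    have hP : 0 < S t := hSpos t hU hV
    obtain ⟨h1, h2⟩ := hcond (S t) hP
    have hrel : (S t)^2 * ((a+t*c)*(b+t*d)) = 1 := sq_rpow hW
    set U := a + t*c
    set V := b + t*d
    set P := S t
    set p1 := phi' (S t)
    set p2 := phi'' (S t)
    have Geq : G t * (4*U*V^2) = P*(P*p2-p1)*(c*V+U*d)^2 + 4*U^2*(P*p1)*d^2 := by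
      simp only [hGdef, hsd'def, hsddef]
      linear_combination (-V^2*P*c^2*p1 + V^2*P^2*c^2*p2 - 2*U*V*P*c*d*p1 + 2*U*V*P^2*c*d*p2
        + 3*U*V^3*P^3*c^2*p1 + U*V^3*P^4*c^2*p2 + 3*U^2*P*d^2*p1 + U^2*P^2*d^2*p2
        + 6*U^2*V^2*P^3*c*d*p1 + 2*U^2*V^2*P^4*c*d*p2 + 3*U^3*V*P^3*d^2*p1
        + U^3*V*P^4*d^2*p2) * hrel
    have hRHS : 0 ≤ P*(P*p2-p1)*(c*V+U*d)^2 + 4*U^2*(P*p1)*d^2 := by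
      have t1 : 0 ≤ P*(P*p2-p1) := mul_nonneg hP.le (by linarith)
      have t2 : 0 ≤ P*p1 := mul_nonneg hP.le h1
      positivity
    have hk : (0:ℝ) < 4*U*V^2 := by positivity
    exact (mul_nonneg_iff_of_pos_right hk).1 (Geq ▸ hRHS)
  -- assemble convexity
  apply convexOn_of_deriv2_nonneg (convex_Icc 0 1)
  · intro t ht
    exact ((hf t (hpos t ht).1 (hpos t ht).2).continuousAt).continuousWithinAt
  · rw [interior_Icc]
    intro t ht
    have ht' := hpos t (Ioo_subset_Icc_self ht)
    exact ((hf t ht'.1 ht'.2).differentiableAt).differentiableWithinAt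
  · rw [interior_Icc]
    intro t ht
    have heq : deriv (fun t => (a + t*c) * phi (S t)) =ᶠ[nhds t] H := by
      filter_upwards [isOpen_Ioo.mem_nhds ht] with s hs
      exact (hf s (hpos s (Ioo_subset_Icc_self hs)).1 (hpos s (Ioo_subset_Icc_self hs)).2).deriv
    have ht' := hpos t (Ioo_subset_Icc_self ht)
    exact (((hH t ht'.1 ht'.2).differentiableAt).congr_of_eventuallyEq heq).differentiableWithinAt
  · rw [interior_Icc]
    intro t ht
    have heq : deriv (fun t => (a + t*c) * phi (S t)) =ᶠ[nhds t] H := by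
      filter_upwards [isOpen_Ioo.mem_nhds ht] with s hs
      exact (hf s (hpos s (Ioo_subset_Icc_self hs)).1 (hpos s (Ioo_subset_Icc_self hs)).2).deriv
    have ht' := hpos t (Ioo_subset_Icc_self ht)
    have : deriv^[2] (fun t => (a + t*c) * phi (S t)) t = G t := by
      show deriv (deriv (fun t => (a + t*c) * phi (S t))) t = G t
      rw [heq.deriv_eq, (hH t ht'.1 ht'.2).deriv]
    rw [this]
    exact hGnonneg t ht'.1 ht'.2

/-- Convexity of entropies in `s_xx`: if `0 ≤ φ' ≤ s φ''` on `(0, ∞)` then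
`(q₁, q₃) ↦ q₁ φ((q₁ q₃)^{-1/2})` is convex on `(0, ∞) × (0, ∞)`. -/
theorem entropy_sxx_convex
    (phi : ℝ → ℝ) (hphi : ContDiffOn ℝ 2 phi (Set.Ioi 0))
    (hcond : ∀ s : ℝ, 0 < s → 0 ≤ deriv phi s ∧ deriv phi s ≤ s * deriv (deriv phi) s) :
    ConvexOn ℝ (Set.Ioi (0 : ℝ) ×ˢ Set.Ioi (0 : ℝ))
      (fun p : ℝ × ℝ => p.1 * phi ((p.1 * p.2) ^ (-(1 / 2) : ℝ))) := by
  have hd1 : ∀ x : ℝ, 0 < x → HasDerivAt phi (deriv phi x) x := by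
    intro x hx
    exact ((hphi.differentiableOn (by norm_num)).differentiableAt
      (Ioi_mem_nhds hx)).hasDerivAt
  have hC1 : ContDiffOn ℝ 1 (deriv phi) (Ioi 0) :=
    hphi.deriv_of_isOpen isOpen_Ioi (by norm_num)
  have hd2 : ∀ x : ℝ, 0 < x → HasDerivAt (deriv phi) (deriv (deriv phi) x) x := by
    intro x hx
    exact ((hC1.differentiableOn (by norm_num)).differentiableAt (Ioi_mem_nhds hx)).hasDerivAt
  constructor
  · exact (convex_Ioi _).prod (convex_Ioi _)
  · intro x hx y hy α β hα hβ hαβ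
    have hx1 : 0 < x.1 := hx.1
    have hx2 : 0 < x.2 := hx.2
    have hy1 : 0 < y.1 := hy.1
    have hy2 : 0 < y.2 := hy.2
    have comb : ∀ (p q t : ℝ), 0 < p → 0 < q → 0 ≤ t → t ≤ 1 → 0 < p + t*(q - p) := by
      intro p q t hp hq ht ht1
      rcases eq_or_lt_of_le ht with h|h
      · simpa [← h] using hp
      · nlinarith [mul_pos h hq, mul_nonneg (show (0:ℝ) ≤ 1 - t by linarith) hp.le]
    have hpos : ∀ t ∈ Icc (0:ℝ) 1, 0 < x.1 + t*(y.1 - x.1) ∧ 0 < x.2 + t*(y.2 - x.2) := by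
      intro t ht
      exact ⟨comb _ _ t hx1 hy1 ht.1 ht.2, comb _ _ t hx2 hy2 ht.1 ht.2⟩
    have hcvx := key_1d phi (deriv phi) (deriv (deriv phi)) hd1 hd2 hcond
      x.1 x.2 (y.1 - x.1) (y.2 - x.2) hpos
    have h01 : (0:ℝ) ∈ Icc (0:ℝ) 1 := by norm_num
    have h11 : (1:ℝ) ∈ Icc (0:ℝ) 1 := by norm_num
    have := hcvx.2 h01 h11 hα hβ hαβ
    have hα1 : α = 1 - β := by linarith
    subst hα1
    simp only [smul_eq_mul, mul_zero, mul_one, zero_add] at this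
    have e1 : x.1 + β*(y.1 - x.1) = ((1-β) • x + β • y).1 := by
      simp [Prod.smul_def]; ring
    have e2 : x.2 + β*(y.2 - x.2) = ((1-β) • x + β • y).2 := by
      simp [Prod.smul_def]; ring
    have e3 : x.1 + 0*(y.1 - x.1) = x.1 := by ring
    have e4 : x.2 + 0*(y.2 - x.2) = x.2 := by ring
    have e5 : x.1 + 1*(y.1 - x.1) = y.1 := by ring
    have e6 : x.2 + 1*(y.2 - x.2) = y.2 := by ring
    rw [e1, e2, e3, e4, e5, e6] at this
    simpa using this
end

section
/- Convexity of entropies in s_zz: let phi : (0, ∞) → ℝ be twice continuously differentiable with 0 ≤ −phi'(s) ≤ 3 s·phi''(s) for all s > 0. Then the function (q₁, q₄) ↦ q₁ · phi( q₄^{1/2} · q₁^{−3/2} ) is convex on (0, ∞) × (0, ∞). -/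
open Set

private lemma haff (c m t : ℝ) : HasDerivAt (fun t : ℝ => c + t * m) m t := by
  simpa using ((hasDerivAt_id t).mul_const m).const_add c

private lemma hrp {c m t : ℝ} (p : ℝ) (h : 0 < c + t * m) :
    HasDerivAt (fun t : ℝ => (c + t * m) ^ p) (p * (c + t * m) ^ (p - 1) * m) t := by
  have h2 := (Real.hasDerivAt_rpow_const (x := c + t * m) (p := p) (Or.inl h.ne')).comp
    t (haff c m t)
  simpa [Function.comp_def, mul_assoc] using h2

private lemma convex_comb_pos {a b P Q : ℝ} (ha : 0 ≤ a) (hb : 0 ≤ b) (hab : a + b = 1)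
    (hP : 0 < P) (hQ : 0 < Q) : 0 < a * P + b * Q := by
  rcases ha.lt_or_eq with h | h
  · nlinarith [mul_nonneg hb hQ.le, mul_pos h hP]
  · have hb1 : b = 1 := by linarith
    simp [← h, hb1, hQ]

private lemma quadform_nonneg (u v A B a b : ℝ) (hA : 0 < A) (hB : 0 < B)
    (ha : 0 ≤ -a) (hb : -a ≤ 3 * (B / A ^ 3) * b) :
    0 ≤ 2 * u * a * (v / (2 * B * A ^ 3) - 3 * u * B / (2 * A ^ 5))
      + A ^ 2 * b * (v / (2 * B * A ^ 3) - 3 * u * B / (2 * A ^ 5)) ^ 2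
      + A ^ 2 * a * (-v ^ 2 / (4 * B ^ 3 * A ^ 3) - 3 * u * v / (2 * B * A ^ 5)
          + 15 * u ^ 2 * B / (4 * A ^ 7)) := by
  have hP : 0 ≤ a + 3 * (B / A ^ 3) * b := by linarith
  have key : 2 * u * a * (v / (2 * B * A ^ 3) - 3 * u * B / (2 * A ^ 5))
      + A ^ 2 * b * (v / (2 * B * A ^ 3) - 3 * u * B / (2 * A ^ 5)) ^ 2
      + A ^ 2 * a * (-v ^ 2 / (4 * B ^ 3 * A ^ 3) - 3 * u * v / (2 * B * A ^ 5)
          + 15 * u ^ 2 * B / (4 * A ^ 7))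
      = (B / A ^ 3 * A ^ 2 / 4) * (3 * (a + 3 * (B / A ^ 3) * b)
          * (u / A ^ 2 - v / (3 * B ^ 2)) ^ 2 + (4 / 3) * (-a) * (v / B ^ 2) ^ 2) := by
    field_simp
    ring
  rw [key]
  apply mul_nonneg (by positivity)
  apply add_nonneg
  · exact mul_nonneg (mul_nonneg (by norm_num) hP) (sq_nonneg _)
  · exact mul_nonneg (mul_nonneg (by norm_num) ha) (sq_nonneg _)

private lemma half_pow {X : ℝ} (hX : 0 < X) :
    X = (X ^ ((1/2) : ℝ)) ^ 2
    ∧ X ^ (-(3/2) : ℝ) = ((X ^ ((1/2) : ℝ)) ^ 3)⁻¹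
    ∧ X ^ (-(5/2) : ℝ) = ((X ^ ((1/2) : ℝ)) ^ 5)⁻¹
    ∧ X ^ (-(7/2) : ℝ) = ((X ^ ((1/2) : ℝ)) ^ 7)⁻¹
    ∧ X ^ (-(1/2) : ℝ) = ((X ^ ((1/2) : ℝ)) ^ 1)⁻¹ := by
  have base : ∀ n : ℕ, (X ^ ((1/2) : ℝ)) ^ n = X ^ ((n : ℝ) / 2) := by
    intro n
    rw [← Real.rpow_natCast (X ^ ((1/2) : ℝ)) n, ← Real.rpow_mul hX.le]
    ring_nf
  refine ⟨?_, ?_, ?_, ?_, ?_⟩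
  · rw [base 2]; norm_num
  · rw [Real.rpow_neg hX.le, base 3]; norm_num
  · rw [Real.rpow_neg hX.le, base 5]; norm_num
  · rw [Real.rpow_neg hX.le, base 7]; norm_num
  · rw [Real.rpow_neg hX.le, base 1]; norm_num

private noncomputable def sfD (x0 y0 u v t : ℝ) : ℝ :=
  (y0 + t * v) ^ ((1/2) : ℝ) * (x0 + t * u) ^ (-(3/2) : ℝ)

private noncomputable def SfD (x0 y0 u v t : ℝ) : ℝ :=
  (1/2) * v * (y0 + t * v) ^ (-(1/2) : ℝ) * (x0 + t * u) ^ (-(3/2) : ℝ)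
  - (3/2) * u * (y0 + t * v) ^ ((1/2) : ℝ) * (x0 + t * u) ^ (-(5/2) : ℝ)

private noncomputable def TfD (x0 y0 u v t : ℝ) : ℝ :=
  -(1/4) * v ^ 2 * (y0 + t * v) ^ (-(3/2) : ℝ) * (x0 + t * u) ^ (-(3/2) : ℝ)
  - (3/2) * u * v * (y0 + t * v) ^ (-(1/2) : ℝ) * (x0 + t * u) ^ (-(5/2) : ℝ)
  + (15/4) * u ^ 2 * (y0 + t * v) ^ ((1/2) : ℝ) * (x0 + t * u) ^ (-(7/2) : ℝ)

private noncomputable def G1D (phi : ℝ → ℝ) (x0 y0 u v t : ℝ) : ℝ :=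
  u * phi (sfD x0 y0 u v t) + (x0 + t * u) * (deriv phi (sfD x0 y0 u v t) * SfD x0 y0 u v t)

private noncomputable def G2D (phi : ℝ → ℝ) (x0 y0 u v t : ℝ) : ℝ :=
  2 * u * deriv phi (sfD x0 y0 u v t) * SfD x0 y0 u v t
  + (x0 + t * u) * deriv (deriv phi) (sfD x0 y0 u v t) * (SfD x0 y0 u v t) ^ 2
  + (x0 + t * u) * deriv phi (sfD x0 y0 u v t) * TfD x0 y0 u v t

private lemma sfD_pos {x0 y0 u v t : ℝ} (hX : 0 < x0 + t * u) (hY : 0 < y0 + t * v) :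
    0 < sfD x0 y0 u v t :=
  mul_pos (Real.rpow_pos_of_pos hY _) (Real.rpow_pos_of_pos hX _)

private lemma hds {x0 y0 u v t : ℝ} (hX : 0 < x0 + t * u) (hY : 0 < y0 + t * v) :
    HasDerivAt (sfD x0 y0 u v) (SfD x0 y0 u v t) t := by
  have h := (hrp ((1/2) : ℝ) hY).mul (hrp (-(3/2) : ℝ) hX)
  unfold sfD SfD
  convert h using 1
  · rfl
  · rfl
  · rfl
  norm_num
  ring

private lemma hdS {x0 y0 u v t : ℝ} (hX : 0 < x0 + t * u) (hY : 0 < y0 + t * v) :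
    HasDerivAt (SfD x0 y0 u v) (TfD x0 y0 u v t) t := by
  have h1 := ((hrp (-(1/2) : ℝ) hY).mul (hrp (-(3/2) : ℝ) hX)).const_mul ((1/2) * v)
  have h2 := ((hrp ((1/2) : ℝ) hY).mul (hrp (-(5/2) : ℝ) hX)).const_mul ((3/2) * u)
  have h3 := h1.sub h2
  unfold SfD TfD
  convert h3 using 1
  · rfl
  · rfl
  · funext r
    simp only [Pi.sub_apply, Pi.mul_apply]
    ring
  · norm_num
    ring

private lemma hdg {phi : ℝ → ℝ} {x0 y0 u v t : ℝ} (hX : 0 < x0 + t * u)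
    (hY : 0 < y0 + t * v)
    (hasφ : ∀ {r : ℝ}, 0 < r → HasDerivAt phi (deriv phi r) r) :
    HasDerivAt (fun t => (x0 + t * u) * phi (sfD x0 y0 u v t)) (G1D phi x0 y0 u v t) t := by
  have h := (haff x0 u t).mul ((hasφ (sfD_pos hX hY)).comp t (hds hX hY))
  unfold G1D
  exact h

private lemma hdG1 {phi : ℝ → ℝ} {x0 y0 u v t : ℝ} (hX : 0 < x0 + t * u)
    (hY : 0 < y0 + t * v)
    (hasφ : ∀ {r : ℝ}, 0 < r → HasDerivAt phi (deriv phi r) r)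
    (hasφ1 : ∀ {r : ℝ}, 0 < r → HasDerivAt (deriv phi) (deriv (deriv phi) r) r) :
    HasDerivAt (G1D phi x0 y0 u v) (G2D phi x0 y0 u v t) t := by
  have hφs := (hasφ (sfD_pos hX hY)).comp t (hds hX hY)
  have hφ1s := (hasφ1 (sfD_pos hX hY)).comp t (hds hX hY)
  have hterm2 := (haff x0 u t).mul (hφ1s.mul (hdS hX hY))
  have h := (hφs.const_mul u).add hterm2
  unfold G1D G2D
  convert h using 1
  · rfl
  · rfl
  · rfl
  simp only [Function.comp_apply, Pi.mul_apply]
  ring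

private lemma G2D_nonneg {phi : ℝ → ℝ} {x0 y0 u v t : ℝ} (hX : 0 < x0 + t * u)
    (hY : 0 < y0 + t * v)
    (hcond : ∀ s : ℝ, 0 < s →
      0 ≤ -deriv phi s ∧ -deriv phi s ≤ 3 * s * deriv (deriv phi) s) :
    0 ≤ G2D phi x0 y0 u v t := by
  set A := (x0 + t * u) ^ ((1/2) : ℝ) with hA
  set B := (y0 + t * v) ^ ((1/2) : ℝ) with hB
  have hA0 : 0 < A := Real.rpow_pos_of_pos hX _
  have hB0 : 0 < B := Real.rpow_pos_of_pos hY _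
  obtain ⟨eXX, eX3, eX5, eX7, _⟩ := half_pow hX
  obtain ⟨_, eY3, _, _, eY1⟩ := half_pow hY
  have hst : sfD x0 y0 u v t = B / A ^ 3 := by
    unfold sfD
    rw [eX3, ← hA, ← hB, div_eq_mul_inv]
  obtain ⟨hc1, hc2⟩ := hcond _ (sfD_pos hX hY)
  have hc2' : -deriv phi (sfD x0 y0 u v t)
      ≤ 3 * (B / A ^ 3) * deriv (deriv phi) (sfD x0 y0 u v t) := by
    rw [hst]
    rw [hst] at hc2
    exact hc2
  have hq := quadform_nonneg u v A B (deriv phi (sfD x0 y0 u v t))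
    (deriv (deriv phi) (sfD x0 y0 u v t)) hA0 hB0 hc1 hc2'
  have hGeq : G2D phi x0 y0 u v t = 2 * u * deriv phi (sfD x0 y0 u v t)
        * (v / (2 * B * A ^ 3) - 3 * u * B / (2 * A ^ 5))
      + A ^ 2 * deriv (deriv phi) (sfD x0 y0 u v t)
        * (v / (2 * B * A ^ 3) - 3 * u * B / (2 * A ^ 5)) ^ 2
      + A ^ 2 * deriv phi (sfD x0 y0 u v t) * (-v ^ 2 / (4 * B ^ 3 * A ^ 3)
        - 3 * u * v / (2 * B * A ^ 5) + 15 * u ^ 2 * B / (4 * A ^ 7)) := by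
    conv_lhs => rw [G2D, SfD, TfD]
    rw [eX3, eX5, eX7, eY1, eY3, ← hA, ← hB]
    rw [eXX, ← hA]
    field_simp
  rw [hGeq]
  exact hq

/-- Convexity of entropies in `s_zz`: if `0 ≤ -φ' ≤ 3 s φ''` on `(0, ∞)` then
`(q₁, q₄) ↦ q₁ φ(q₄^{1/2} q₁^{-3/2})` is convex on `(0, ∞) × (0, ∞)`. -/
theorem entropy_szz_convex
    (phi : ℝ → ℝ) (hphi : ContDiffOn ℝ 2 phi (Set.Ioi 0))
    (hcond : ∀ s : ℝ, 0 < s →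
      0 ≤ -deriv phi s ∧ -deriv phi s ≤ 3 * s * deriv (deriv phi) s) :
    ConvexOn ℝ (Set.Ioi (0 : ℝ) ×ˢ Set.Ioi (0 : ℝ))
      (fun p : ℝ × ℝ => p.1 * phi (p.2 ^ ((1 / 2) : ℝ) * p.1 ^ (-(3 / 2) : ℝ))) := by
  have hd1 : DifferentiableOn ℝ phi (Ioi 0) := hphi.differentiableOn (by norm_num)
  have hC1 : ContDiffOn ℝ 1 (deriv phi) (Ioi 0) :=
    hphi.deriv_of_isOpen isOpen_Ioi (by norm_num)
  have hasφ : ∀ {r : ℝ}, 0 < r → HasDerivAt phi (deriv phi r) r := fun hr =>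
    (hd1.differentiableAt (isOpen_Ioi.mem_nhds hr)).hasDerivAt
  have hasφ1 : ∀ {r : ℝ}, 0 < r → HasDerivAt (deriv phi) (deriv (deriv phi) r) r := fun hr =>
    ((hC1.differentiableOn (by norm_num)).differentiableAt (isOpen_Ioi.mem_nhds hr)).hasDerivAt
  refine ⟨(convex_Ioi 0).prod (convex_Ioi 0), ?_⟩
  rintro ⟨x0, y0⟩ hp ⟨x1, y1⟩ hq a b ha hb hab
  simp only [Set.mem_prod, Set.mem_Ioi] at hp hq
  obtain ⟨hx0, hy0⟩ := hp
  obtain ⟨hx1, hy1⟩ := hq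
  set u := x1 - x0 with hu
  set v := y1 - y0 with hv
  set D : Set ℝ := {t | 0 < x0 + t * u ∧ 0 < y0 + t * v} with hD
  have hDopen : IsOpen D := by
    rw [hD, Set.setOf_and]
    exact (isOpen_lt continuous_const (by continuity)).inter
      (isOpen_lt continuous_const (by continuity))
  have hDconvex : Convex ℝ D := by
    intro t1 h1 t2 h2 a' b' ha' hb' hab'
    obtain ⟨h1x, h1y⟩ := h1
    obtain ⟨h2x, h2y⟩ := h2
    constructor
    · have e : x0 + (a' • t1 + b' • t2) * u
          = a' * (x0 + t1 * u) + b' * (x0 + t2 * u) := by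
        simp only [smul_eq_mul]; linear_combination (-x0) * hab'
      rw [e]; exact convex_comb_pos ha' hb' hab' h1x h2x
    · have e : y0 + (a' • t1 + b' • t2) * v
          = a' * (y0 + t1 * v) + b' * (y0 + t2 * v) := by
        simp only [smul_eq_mul]; linear_combination (-y0) * hab'
      rw [e]; exact convex_comb_pos ha' hb' hab' h1y h2y
  have hsub : Icc (0:ℝ) 1 ⊆ D := by
    rintro t ⟨ht0, ht1⟩
    constructor
    · have e : x0 + t * u = (1 - t) * x0 + t * x1 := by rw [hu]; ring
      rw [e]; exact convex_comb_pos (by linarith) ht0 (by ring) hx0 hx1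
    · have e : y0 + t * v = (1 - t) * y0 + t * y1 := by rw [hv]; ring
      rw [e]; exact convex_comb_pos (by linarith) ht0 (by ring) hy0 hy1
  have hintD : interior D = D := hDopen.interior_eq
  -- convexity of the section function
  have hgconv : ConvexOn ℝ D (fun t => (x0 + t * u) * phi (sfD x0 y0 u v t)) := by
    apply convexOn_of_hasDerivWithinAt2_nonneg hDconvex
      (f' := G1D phi x0 y0 u v) (f'' := G2D phi x0 y0 u v)
    · intro t ht
      exact (hdg ht.1 ht.2 hasφ).continuousAt.continuousWithinAt
    · intro t ht
      rw [hintD] at ht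
      exact (hdg ht.1 ht.2 hasφ).hasDerivWithinAt
    · intro t ht
      rw [hintD] at ht
      exact (hdG1 ht.1 ht.2 hasφ hasφ1).hasDerivWithinAt
    · intro t ht
      rw [hintD] at ht
      exact G2D_nonneg ht.1 ht.2 hcond
  have h0 : (0:ℝ) ∈ D := hsub ⟨le_rfl, zero_le_one⟩
  have h1 : (1:ℝ) ∈ D := hsub ⟨zero_le_one, le_rfl⟩
  have hfin := hgconv.2 h0 h1 ha hb hab
  simp only [smul_eq_mul, mul_zero, mul_one, zero_add] at hfin
  have e0 : (x0 + 0 * u) * phi (sfD x0 y0 u v 0)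
      = x0 * phi (y0 ^ ((1 / 2) : ℝ) * x0 ^ (-(3 / 2) : ℝ)) := by
    unfold sfD; norm_num
  have e1 : (x0 + 1 * u) * phi (sfD x0 y0 u v 1)
      = x1 * phi (y1 ^ ((1 / 2) : ℝ) * x1 ^ (-(3 / 2) : ℝ)) := by
    unfold sfD; rw [hu, hv]; norm_num
  rw [e0, e1] at hfin
  have epoint : (a • (x0, y0) + b • (x1, y1) : ℝ × ℝ) = (x0 + b * u, y0 + b * v) := by
    rw [hu, hv, Prod.smul_mk, Prod.smul_mk, Prod.mk_add_mk]
    simp only [Prod.mk.injEq, smul_eq_mul]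
    constructor
    · linear_combination x0 * hab
    · linear_combination y0 * hab
  rw [epoint]
  simp only [smul_eq_mul]
  simpa [sfD] using hfin
end

section
/- Free-energy dissipation identity along the flow: let eta_p, lambda > 0, let u, sigma : ℝ × ℝ → ℝ be continuously differentiable with sigma > 0 everywhere, and suppose ∂t sigma + u ∂x sigma = 2 (∂x u) sigma + (1 − sigma)/lambda pointwise. Define tau = (eta_p/(2 lambda)) (sigma − 1). Then pointwise ∂t ( tau/2 − (eta_p/(4 lambda)) log sigma ) + u ∂x ( tau/2 − (eta_p/(4 lambda)) log sigma ) = (∂x u) tau − tau² / (eta_p sigma). -/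
/-- Free-energy dissipation identity along the flow: with
`τ = (η_p/(2λ))(σ - 1)`, the free energy density `τ/2 - (η_p/(4λ)) log σ`
satisfies the pointwise transport identity
`∂t(·) + u ∂x(·) = (∂x u) τ - τ²/(η_p σ)`. -/
theorem free_energy_dissipation_identity
    (eta_p lam : ℝ) (hetap : 0 < eta_p) (hlam : 0 < lam)
    (u sigma : ℝ × ℝ → ℝ) (hu : ContDiff ℝ 1 u) (hsigma : ContDiff ℝ 1 sigma)
    (hpos : ∀ p, 0 < sigma p)
    (heq : ∀ t x : ℝ,
      deriv (fun s => sigma (s, x)) t + u (t, x) * deriv (fun y => sigma (t, y)) x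
        = 2 * deriv (fun y => u (t, y)) x * sigma (t, x) + (1 - sigma (t, x)) / lam) :
    ∀ t x : ℝ,
      deriv (fun s => eta_p / (2 * lam) * (sigma (s, x) - 1) / 2 -
        eta_p / (4 * lam) * Real.log (sigma (s, x))) t +
      u (t, x) * deriv (fun y => eta_p / (2 * lam) * (sigma (t, y) - 1) / 2 -
        eta_p / (4 * lam) * Real.log (sigma (t, y))) x
      = deriv (fun y => u (t, y)) x * (eta_p / (2 * lam) * (sigma (t, x) - 1)) -
        (eta_p / (2 * lam) * (sigma (t, x) - 1)) ^ 2 / (eta_p * sigma (t, x)) := by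
  intro t x
  have hdiff : Differentiable ℝ sigma := hsigma.differentiable one_ne_zero
  have h1 : HasDerivAt (fun s => sigma (s, x)) (deriv (fun s => sigma (s, x)) t) t :=
    ((hdiff.comp (differentiable_id.prodMk (differentiable_const x))) t).hasDerivAt
  have h2 : HasDerivAt (fun y => sigma (t, y)) (deriv (fun y => sigma (t, y)) x) x :=
    ((hdiff.comp ((differentiable_const t).prodMk differentiable_id)) x).hasDerivAt
  set Dt := deriv (fun s => sigma (s, x)) t
  set Dx := deriv (fun y => sigma (t, y)) x
  set σ := sigma (t, x) with hσ
  have hσpos : 0 < σ := hpos _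
  have hσne : σ ≠ 0 := ne_of_gt hσpos
  have H1 : HasDerivAt (fun s => eta_p / (2 * lam) * (sigma (s, x) - 1) / 2 -
      eta_p / (4 * lam) * Real.log (sigma (s, x)))
      (eta_p / (2 * lam) * Dt / 2 - eta_p / (4 * lam) * (Dt / σ)) t :=
    (((h1.sub_const 1).const_mul (eta_p / (2 * lam))).div_const 2).sub
      ((h1.log hσne).const_mul (eta_p / (4 * lam)))
  have H2 : HasDerivAt (fun y => eta_p / (2 * lam) * (sigma (t, y) - 1) / 2 -
      eta_p / (4 * lam) * Real.log (sigma (t, y)))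
      (eta_p / (2 * lam) * Dx / 2 - eta_p / (4 * lam) * (Dx / σ)) x :=
    (((h2.sub_const 1).const_mul (eta_p / (2 * lam))).div_const 2).sub
      ((h2.log hσne).const_mul (eta_p / (4 * lam)))
  rw [H1.deriv, H2.deriv]
  have key := heq t x
  have hDt : Dt = 2 * deriv (fun y => u (t, y)) x * σ + (1 - σ) / lam - u (t, x) * Dx := by
    rw [← hσ] at key; linarith
  rw [hDt]
  field_simp
  ring
end
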